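/- arXiv:2004.04726 — 2 statements merged into one kernel-verified Lean document; each statement's English description precedes it below -/
import Mathlib

section
/- Let Q be an acyclic quiver whose underlying graph is of type Aₙ, with iterated deconcatenation Q¹ ⊔ ⋯ ⊔ Qˡ into equioriented type A quivers of sizes n₁,…,n_ℓ. Then the number of quasi-hereditary structures on kQ equals the product of Catalan numbers C_{n₁} · C_{n₂} ⋯ C_{n_ℓ}. -/
/-!
STATEMENT 8.  Let `Q` be an acyclic quiver of type `Aₙ`, encoded by an orientation function
`o : ℕ → Bool` (the edge between vertices `e` and `e+1` points right iff `o e = true`), and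
let `Q¹ ⊔ ⋯ ⊔ Qˡ` be its iterated deconcatenation into maximal equioriented segments, of
sizes `n₁, …, n_ℓ` (encoded by the list `ns`; segment `t` consists of the `ns[t] - 1` edges
between the cut points, consecutive segments overlap in one vertex, orientation is constant
on each segment and flips between consecutive segments).  Then
`|qh.str(kQ)| = C_{n₁} ⋯ C_{n_ℓ}`.

`kQ` is the incidence algebra of the path order `⇝` on the vertices (the reflexive-transitive
closure of the arrow relation), so quasi-hereditary structures are equivalence classes of
adapted orders, two being equivalent iff they have the same `Dec` and `Inc` relations.
-/

section
variable {V : Type*} (le : V → V → Prop)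

/-- Adaptedness of `⊲` with respect to the order `le` (the interval criterion). -/
def AdaptedG (lhd : V → V → Prop) : Prop :=
  ∀ i j : V, le i j → ¬ lhd i j → ¬ lhd j i →
    ∃ k : V, le i k ∧ le k j ∧ lhd i k ∧ lhd j k

/-- `(x, y) ∈ Dec(⊲)`: `S(x)` is a composition factor of the standard module `Δ(y)`. -/
def DecRelG (lhd : V → V → Prop) (x y : V) : Prop :=
  le y x ∧ ∀ k : V, le y k → le k x → lhd k y

/-- `(x, y) ∈ Inc(⊲)`: `S(x)` is a composition factor of the costandard module `∇(y)`. -/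
def IncRelG (lhd : V → V → Prop) (x y : V) : Prop :=
  le x y ∧ ∀ k : V, le x k → le k y → lhd k y

/-- Equivalence of adapted orders: equal standard and costandard modules. -/
def QHEquivG (lhd₁ lhd₂ : V → V → Prop) : Prop :=
  (∀ x y, DecRelG le lhd₁ x y ↔ DecRelG le lhd₂ x y) ∧
  (∀ x y, IncRelG le lhd₁ x y ↔ IncRelG le lhd₂ x y)

end

/-- The arrow relation of the type `A` quiver on `Fin n` with orientation `o`. -/
def lineArrow (n : ℕ) (o : ℕ → Bool) (a b : Fin n) : Prop :=
  (a.val + 1 = b.val ∧ o a.val = true) ∨ (b.val + 1 = a.val ∧ o b.val = false)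

/-- Cut point of segment `t`: total number of edges in the first `t` segments. -/
def cutPt (ns : List ℕ) (t : ℕ) : ℕ := ((ns.take t).map fun m => m - 1).sum

section QHS
variable {V : Type*}

def AdOrd (le : V → V → Prop) := {l : V → V → Prop // IsPartialOrder V l ∧ AdaptedG le l}

def QHS (le : V → V → Prop) :=
  Quot (fun (l₁ l₂ : AdOrd le) => QHEquivG le l₁.1 l₂.1)

theorem qhequiv_equivalence (le : V → V → Prop) :
    Equivalence (fun (l₁ l₂ : AdOrd le) => QHEquivG le l₁.1 l₂.1) := by
  constructor
  · intro a; exact ⟨fun x y => Iff.rfl, fun x y => Iff.rfl⟩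
  · intro a b h; exact ⟨fun x y => (h.1 x y).symm, fun x y => (h.2 x y).symm⟩
  · intro a b c h1 h2
    exact ⟨fun x y => (h1.1 x y).trans (h2.1 x y), fun x y => (h1.2 x y).trans (h2.2 x y)⟩

theorem qhs_mk_eq_iff {le : V → V → Prop} (a b : AdOrd le) :
    (Quot.mk _ a : QHS le) = Quot.mk _ b ↔ QHEquivG le a.1 b.1 := by
  rw [Quot.eq]
  exact (qhequiv_equivalence le).eqvGen_iff

theorem qhequiv_of_iff {le l l' : V → V → Prop} (h : ∀ a b, l a b ↔ l' a b) :
    QHEquivG le l l' := by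
  have : l = l' := by funext a b; exact propext (h a b)
  subst this
  exact ⟨fun _ _ => Iff.rfl, fun _ _ => Iff.rfl⟩

/-! ### Restriction to interval-closed subsets -/

def leSub (le : V → V → Prop) (S : V → Prop) : {x // S x} → {x // S x} → Prop :=
  fun a b => le a.1 b.1

def resRel (S : V → Prop) (l : V → V → Prop) : {x // S x} → {x // S x} → Prop :=
  fun a b => l a.1 b.1

variable {le : V → V → Prop} {S : V → Prop}

theorem res_po {l : V → V → Prop} (hl : IsPartialOrder V l) :
    IsPartialOrder {x // S x} (resRel S l) := by
  exact { refl := fun a => hl.refl a.1,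
          trans := fun a b c hab hbc => hl.trans _ _ _ hab hbc,
          antisymm := fun a b hab hba => Subtype.ext (hl.antisymm _ _ hab hba) }

theorem res_adapted (hS : ∀ x k y, S x → S y → le x k → le k y → S k)
    {l : V → V → Prop} (hl : AdaptedG le l) :
    AdaptedG (leSub le S) (resRel S l) := by
  intro i j hij h1 h2
  obtain ⟨k, hk1, hk2, hk3, hk4⟩ := hl i.1 j.1 hij h1 h2
  exact ⟨⟨k, hS i.1 k j.1 i.2 j.2 hk1 hk2⟩, hk1, hk2, hk3, hk4⟩

theorem res_dec (hS : ∀ x k y, S x → S y → le x k → le k y → S k)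
    (l : V → V → Prop) (x y : {x // S x}) :
    DecRelG (leSub le S) (resRel S l) x y ↔ DecRelG le l x.1 y.1 := by
  constructor
  · rintro ⟨h1, h2⟩
    exact ⟨h1, fun k hk1 hk2 => h2 ⟨k, hS y.1 k x.1 y.2 x.2 hk1 hk2⟩ hk1 hk2⟩
  · rintro ⟨h1, h2⟩
    exact ⟨h1, fun k hk1 hk2 => h2 k.1 hk1 hk2⟩

theorem res_inc (hS : ∀ x k y, S x → S y → le x k → le k y → S k)
    (l : V → V → Prop) (x y : {x // S x}) :
    IncRelG (leSub le S) (resRel S l) x y ↔ IncRelG le l x.1 y.1 := by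
  constructor
  · rintro ⟨h1, h2⟩
    exact ⟨h1, fun k hk1 hk2 => h2 ⟨k, hS x.1 k y.1 x.2 y.2 hk1 hk2⟩ hk1 hk2⟩
  · rintro ⟨h1, h2⟩
    exact ⟨h1, fun k hk1 hk2 => h2 k.1 hk1 hk2⟩

def resAdOrd (hS : ∀ x k y, S x → S y → le x k → le k y → S k)
    (l : AdOrd le) : AdOrd (leSub le S) :=
  ⟨resRel S l.1, res_po l.2.1, res_adapted hS l.2.2⟩

end QHS

section Glue
variable {V : Type*} {le : V → V → Prop} {Lp Rp : V → Prop} {c : V}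

def grel (P : V → Prop) (l : {x // P x} → {x // P x} → Prop) : V → V → Prop :=
  fun x y => ∃ (hx : P x) (hy : P y), l ⟨x, hx⟩ ⟨y, hy⟩

theorem grel_iff {P : V → Prop} (l : {x // P x} → {x // P x} → Prop) (a b : {x // P x}) :
    grel P l a.1 b.1 ↔ l a b := by
  constructor
  · rintro ⟨hx, hy, h⟩; cases a; cases b; exact h
  · intro h; exact ⟨a.2, b.2, by cases a; cases b; exact h⟩

theorem grel_fst {P : V → Prop} {l : {x // P x} → {x // P x} → Prop} {x y : V}
    (h : grel P l x y) : P x := h.1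
theorem grel_snd {P : V → Prop} {l : {x // P x} → {x // P x} → Prop} {x y : V}
    (h : grel P l x y) : P y := h.2.1

section grelFacts
variable {P : V → Prop} {l : {x // P x} → {x // P x} → Prop} (hl : IsPartialOrder {x // P x} l)
include hl


theorem grel_refl {x : V} (hx : P x) : grel P l x x := ⟨hx, hx, hl.refl _⟩

theorem grel_trans {x y z : V} (h1 : grel P l x y) (h2 : grel P l y z) : grel P l x z := by
  obtain ⟨hx, hy, h⟩ := h1
  obtain ⟨hy', hz, h'⟩ := h2
  exact ⟨hx, hz, hl.trans _ _ _ h h'⟩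

theorem grel_antisymm {x y : V} (h1 : grel P l x y) (h2 : grel P l y x) : x = y := by
  obtain ⟨hx, hy, h⟩ := h1
  obtain ⟨hy', hx', h'⟩ := h2
  exact congrArg Subtype.val (hl.antisymm (⟨x, hx⟩ : {x // P x}) ⟨y, hy⟩ h h')

end grelFacts

variable (hmeet : ∀ x, Lp x → Rp x → x = c) (hLc : Lp c) (hRc : Rp c)

def glueRel (c : V) (Lp Rp : V → Prop) (l₁ : {x // Lp x} → {x // Lp x} → Prop)
    (l₂ : {x // Rp x} → {x // Rp x} → Prop) : V → V → Prop :=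
  fun x y => grel Lp l₁ x y ∨ grel Rp l₂ x y ∨
    (grel Lp l₁ x c ∧ grel Rp l₂ c y) ∨ (grel Rp l₂ x c ∧ grel Lp l₁ c y)

variable {l₁ : {x // Lp x} → {x // Lp x} → Prop} {l₂ : {x // Rp x} → {x // Rp x} → Prop}
  (hl₁ : IsPartialOrder _ l₁) (hl₂ : IsPartialOrder _ l₂)

include hmeet hl₁ hl₂ in
theorem glue_trans : ∀ x y z, glueRel c Lp Rp l₁ l₂ x y → glueRel c Lp Rp l₁ l₂ y z →
    glueRel c Lp Rp l₁ l₂ x z := by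
    intro x y z hxy hyz
    rcases hxy with h1 | h1 | ⟨h1a, h1b⟩ | ⟨h1a, h1b⟩ <;>
      rcases hyz with h2 | h2 | ⟨h2a, h2b⟩ | ⟨h2a, h2b⟩
    · exact Or.inl (grel_trans hl₁ h1 h2)
    · have hy : y = c := hmeet y (grel_snd h1) (grel_fst h2)
      subst hy; exact Or.inr (Or.inr (Or.inl ⟨h1, h2⟩))
    · exact Or.inr (Or.inr (Or.inl ⟨grel_trans hl₁ h1 h2a, h2b⟩))
    · have hy : y = c := hmeet y (grel_snd h1) (grel_fst h2a)
      subst hy; exact Or.inl (grel_trans hl₁ h1 h2b)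
    · have hy : y = c := hmeet y (grel_fst h2) (grel_snd h1)
      subst hy; exact Or.inr (Or.inr (Or.inr ⟨h1, h2⟩))
    · exact Or.inr (Or.inl (grel_trans hl₂ h1 h2))
    · have hy : y = c := hmeet y (grel_fst h2a) (grel_snd h1)
      subst hy; exact Or.inr (Or.inl (grel_trans hl₂ h1 h2b))
    · exact Or.inr (Or.inr (Or.inr ⟨grel_trans hl₂ h1 h2a, h2b⟩))
    · have hy : y = c := hmeet y (grel_fst h2) (grel_snd h1b)
      subst hy; exact Or.inl (grel_trans hl₁ h1a h2)
    · exact Or.inr (Or.inr (Or.inl ⟨h1a, grel_trans hl₂ h1b h2⟩))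
    · have hy : y = c := hmeet y (grel_fst h2a) (grel_snd h1b)
      subst hy; exact Or.inr (Or.inr (Or.inl ⟨h1a, h2b⟩))
    · have hy : y = c := grel_antisymm hl₂ h2a h1b
      subst hy; exact Or.inl (grel_trans hl₁ h1a h2b)
    · exact Or.inr (Or.inr (Or.inr ⟨h1a, grel_trans hl₁ h1b h2⟩))
    · have hy : y = c := hmeet y (grel_snd h1b) (grel_fst h2)
      subst hy; exact Or.inr (Or.inl (grel_trans hl₂ h1a h2))
    · have hy : y = c := grel_antisymm hl₁ h2a h1b
      subst hy; exact Or.inr (Or.inl (grel_trans hl₂ h1a h2b))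
    · have hy : y = c := hmeet y (grel_snd h1b) (grel_fst h2a)
      subst hy; exact Or.inr (Or.inr (Or.inr ⟨h1a, h2b⟩))
include hmeet hl₁ hl₂ in
theorem glue_antisymm : ∀ x y, glueRel c Lp Rp l₁ l₂ x y → glueRel c Lp Rp l₁ l₂ y x →
    x = y := by
    intro x y hxy hyx
    rcases hxy with h1 | h1 | ⟨h1a, h1b⟩ | ⟨h1a, h1b⟩ <;>
      rcases hyx with h2 | h2 | ⟨h2a, h2b⟩ | ⟨h2a, h2b⟩
    · exact grel_antisymm hl₁ h1 h2
    · have hx : x = c := hmeet x (grel_fst h1) (grel_snd h2)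
      have hy : y = c := hmeet y (grel_snd h1) (grel_fst h2)
      rw [hx, hy]
    · have hx : x = c := hmeet x (grel_fst h1) (grel_snd h2b)
      subst hx; exact (grel_antisymm hl₁ h2a h1).symm
    · have hy : y = c := hmeet y (grel_snd h1) (grel_fst h2a)
      subst hy; exact grel_antisymm hl₁ h1 h2b
    · have hx : x = c := hmeet x (grel_snd h2) (grel_fst h1)
      have hy : y = c := hmeet y (grel_fst h2) (grel_snd h1)
      rw [hx, hy]
    · exact grel_antisymm hl₂ h1 h2
    · have hy : y = c := hmeet y (grel_fst h2a) (grel_snd h1)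
      subst hy; exact grel_antisymm hl₂ h1 h2b
    · have hx : x = c := hmeet x (grel_snd h2b) (grel_fst h1)
      subst hx; exact (grel_antisymm hl₂ h2a h1).symm
    · have hy : y = c := hmeet y (grel_fst h2) (grel_snd h1b)
      subst hy; exact grel_antisymm hl₁ h1a h2
    · have hx : x = c := hmeet x (grel_fst h1a) (grel_snd h2)
      subst hx; exact (grel_antisymm hl₂ h2 h1b).symm
    · have hx : x = c := hmeet x (grel_fst h1a) (grel_snd h2b)
      have hy : y = c := hmeet y (grel_fst h2a) (grel_snd h1b)
      rw [hx, hy]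
    · exact (grel_antisymm hl₁ h1a h2b).trans (grel_antisymm hl₂ h1b h2a)
    · have hx : x = c := hmeet x (grel_snd h2) (grel_fst h1a)
      subst hx; exact grel_antisymm hl₁ h1b h2
    · have hy : y = c := hmeet y (grel_snd h1b) (grel_fst h2)
      subst hy; exact grel_antisymm hl₂ h1a h2
    · exact (grel_antisymm hl₂ h1a h2b).trans (grel_antisymm hl₁ h1b h2a)
    · have hx : x = c := hmeet x (grel_snd h2b) (grel_fst h1a)
      have hy : y = c := hmeet y (grel_snd h1b) (grel_fst h2a)
      rw [hx, hy]

include hmeet hl₁ hl₂ in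
theorem glue_po (hcov : ∀ x, Lp x ∨ Rp x) : IsPartialOrder V (glueRel c Lp Rp l₁ l₂) :=
  { refl := fun x => by
      rcases hcov x with hx | hx
      · exact Or.inl (grel_refl hl₁ hx)
      · exact Or.inr (Or.inl (grel_refl hl₂ hx)),
    trans := glue_trans hmeet hl₁ hl₂,
    antisymm := glue_antisymm hmeet hl₁ hl₂ }

variable {le : V → V → Prop}

theorem glue_adapted (hside : ∀ x y, le x y → (Lp x ∧ Lp y) ∨ (Rp x ∧ Rp y))
    (ha₁ : AdaptedG (leSub le Lp) l₁) (ha₂ : AdaptedG (leSub le Rp) l₂) :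
    AdaptedG le (glueRel c Lp Rp l₁ l₂) := by
  intro i j hij hn1 hn2
  rcases hside i j hij with ⟨hi, hj⟩ | ⟨hi, hj⟩
  · obtain ⟨k, hk1, hk2, hk3, hk4⟩ := ha₁ ⟨i, hi⟩ ⟨j, hj⟩ hij
      (fun h => hn1 (Or.inl ((grel_iff l₁ ⟨i, hi⟩ ⟨j, hj⟩).2 h)))
      (fun h => hn2 (Or.inl ((grel_iff l₁ ⟨j, hj⟩ ⟨i, hi⟩).2 h)))
    exact ⟨k.1, hk1, hk2, Or.inl ((grel_iff l₁ ⟨i, hi⟩ k).2 hk3),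
      Or.inl ((grel_iff l₁ ⟨j, hj⟩ k).2 hk4)⟩
  · obtain ⟨k, hk1, hk2, hk3, hk4⟩ := ha₂ ⟨i, hi⟩ ⟨j, hj⟩ hij
      (fun h => hn1 (Or.inr (Or.inl ((grel_iff l₂ ⟨i, hi⟩ ⟨j, hj⟩).2 h))))
      (fun h => hn2 (Or.inr (Or.inl ((grel_iff l₂ ⟨j, hj⟩ ⟨i, hi⟩).2 h))))
    exact ⟨k.1, hk1, hk2, Or.inr (Or.inl ((grel_iff l₂ ⟨i, hi⟩ k).2 hk3)),
      Or.inr (Or.inl ((grel_iff l₂ ⟨j, hj⟩ k).2 hk4))⟩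

include hmeet hl₁ in
theorem glue_resL : ∀ a b : {x // Lp x},
    resRel Lp (glueRel c Lp Rp l₁ l₂) a b ↔ l₁ a b := by
  intro a b
  constructor
  · rintro (h | h | ⟨h1, h2⟩ | ⟨h1, h2⟩)
    · exact (grel_iff l₁ a b).1 h
    · have ha : a.1 = c := hmeet a.1 a.2 (grel_fst h)
      have hb : b.1 = c := hmeet b.1 b.2 (grel_snd h)
      have : a = b := Subtype.ext (ha.trans hb.symm)
      rw [this]; exact hl₁.refl b
    · have hb : c = b.1 := (hmeet b.1 b.2 (grel_snd h2)).symm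
      rw [hb] at h1; exact (grel_iff l₁ a b).1 h1
    · have ha : c = a.1 := (hmeet a.1 a.2 (grel_fst h1)).symm
      rw [ha] at h2; exact (grel_iff l₁ a b).1 h2
  · intro h; exact Or.inl ((grel_iff l₁ a b).2 h)

include hmeet hl₂ in
theorem glue_resR : ∀ a b : {x // Rp x},
    resRel Rp (glueRel c Lp Rp l₁ l₂) a b ↔ l₂ a b := by
  intro a b
  constructor
  · rintro (h | h | ⟨h1, h2⟩ | ⟨h1, h2⟩)
    · have ha : a.1 = c := hmeet a.1 (grel_fst h) a.2
      have hb : b.1 = c := hmeet b.1 (grel_snd h) b.2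
      have : a = b := Subtype.ext (ha.trans hb.symm)
      rw [this]; exact hl₂.refl b
    · exact (grel_iff l₂ a b).1 h
    · have ha : c = a.1 := (hmeet a.1 (grel_fst h1) a.2).symm
      rw [ha] at h2; exact (grel_iff l₂ a b).1 h2
    · have hb : c = b.1 := (hmeet b.1 (grel_snd h2) b.2).symm
      rw [hb] at h1; exact (grel_iff l₂ a b).1 h1
  · intro h; exact Or.inr (Or.inl ((grel_iff l₂ a b).2 h))

end Glue

section CardGlue
variable {V : Type*} {le : V → V → Prop} {Lp Rp : V → Prop} {c : V}

def resPairF (hSL : ∀ x k y, Lp x → Lp y → le x k → le k y → Lp k)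
    (hSR : ∀ x k y, Rp x → Rp y → le x k → le k y → Rp k) :
    QHS le → QHS (leSub le Lp) × QHS (leSub le Rp) :=
  Quot.lift (fun l => (Quot.mk _ (resAdOrd hSL l), Quot.mk _ (resAdOrd hSR l)))
    (by
      intro a b hab
      refine Prod.ext ((qhs_mk_eq_iff _ _).2 ?_) ((qhs_mk_eq_iff _ _).2 ?_)
      · exact ⟨fun x y => (res_dec hSL a.1 x y).trans
            ((hab.1 _ _).trans (res_dec hSL b.1 x y).symm),
          fun x y => (res_inc hSL a.1 x y).trans
            ((hab.2 _ _).trans (res_inc hSL b.1 x y).symm)⟩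
      · exact ⟨fun x y => (res_dec hSR a.1 x y).trans
            ((hab.1 _ _).trans (res_dec hSR b.1 x y).symm),
          fun x y => (res_inc hSR a.1 x y).trans
            ((hab.2 _ _).trans (res_inc hSR b.1 x y).symm)⟩)

theorem card_glue (hpo : IsPartialOrder V le)
    (hcov : ∀ x, Lp x ∨ Rp x) (hmeet : ∀ x, Lp x → Rp x → x = c)
    (hside : ∀ x y, le x y → (Lp x ∧ Lp y) ∨ (Rp x ∧ Rp y)) :
    Nat.card (QHS le) = Nat.card (QHS (leSub le Lp)) * Nat.card (QHS (leSub le Rp)) := by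
  have hSL : ∀ x k y, Lp x → Lp y → le x k → le k y → Lp k := by
    intro x k y hx hy h1 h2
    rcases hside x k h1 with ⟨-, hk⟩ | ⟨hx', hk'⟩
    · exact hk
    rcases hside k y h2 with ⟨hk, -⟩ | ⟨hk', hy'⟩
    · exact hk
    have hxc : x = c := hmeet x hx hx'
    have hyc : y = c := hmeet y hy hy'
    subst hxc; rw [hyc] at h2
    have : k = x := hpo.antisymm k x h2 h1
    rw [this]; exact hx
  have hSR : ∀ x k y, Rp x → Rp y → le x k → le k y → Rp k := by
    intro x k y hx hy h1 h2
    rcases hside x k h1 with ⟨hx', hk'⟩ | ⟨-, hk⟩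
    swap
    · exact hk
    rcases hside k y h2 with ⟨hk', hy'⟩ | ⟨hk, -⟩
    swap
    · exact hk
    have hxc : x = c := hmeet x hx' hx
    have hyc : y = c := hmeet y hy' hy
    subst hxc; rw [hyc] at h2
    have : k = x := hpo.antisymm k x h2 h1
    rw [this]; exact hx
  have hbij : Function.Bijective (resPairF hSL hSR) := by
    constructor
    · intro q q'
      induction q using Quot.ind with | _ a =>
      induction q' using Quot.ind with | _ b =>
      intro h
      have h1 : (Quot.mk _ (resAdOrd hSL a) : QHS (leSub le Lp)) = Quot.mk _ (resAdOrd hSL b) :=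
        congrArg Prod.fst h
      have h2 : (Quot.mk _ (resAdOrd hSR a) : QHS (leSub le Rp)) = Quot.mk _ (resAdOrd hSR b) :=
        congrArg Prod.snd h
      replace h1 := (qhs_mk_eq_iff _ _).1 h1
      replace h2 := (qhs_mk_eq_iff _ _).1 h2
      apply Quot.sound
      constructor
      · intro x y
        by_cases hyx : le y x
        · rcases hside y x hyx with ⟨hy, hx⟩ | ⟨hy, hx⟩
          · exact (res_dec hSL a.1 ⟨x, hx⟩ ⟨y, hy⟩).symm.trans
              ((h1.1 ⟨x, hx⟩ ⟨y, hy⟩).trans (res_dec hSL b.1 ⟨x, hx⟩ ⟨y, hy⟩))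
          · exact (res_dec hSR a.1 ⟨x, hx⟩ ⟨y, hy⟩).symm.trans
              ((h2.1 ⟨x, hx⟩ ⟨y, hy⟩).trans (res_dec hSR b.1 ⟨x, hx⟩ ⟨y, hy⟩))
        · constructor <;> (rintro ⟨hh, -⟩; exact absurd hh hyx)
      · intro x y
        by_cases hxy : le x y
        · rcases hside x y hxy with ⟨hx, hy⟩ | ⟨hx, hy⟩
          · exact (res_inc hSL a.1 ⟨x, hx⟩ ⟨y, hy⟩).symm.trans
              ((h1.2 ⟨x, hx⟩ ⟨y, hy⟩).trans (res_inc hSL b.1 ⟨x, hx⟩ ⟨y, hy⟩))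
          · exact (res_inc hSR a.1 ⟨x, hx⟩ ⟨y, hy⟩).symm.trans
              ((h2.2 ⟨x, hx⟩ ⟨y, hy⟩).trans (res_inc hSR b.1 ⟨x, hx⟩ ⟨y, hy⟩))
        · constructor <;> (rintro ⟨hh, -⟩; exact absurd hh hxy)
    · rintro ⟨q1, q2⟩
      induction q1 using Quot.ind with | _ a =>
      induction q2 using Quot.ind with | _ b =>
      refine ⟨Quot.mk _ ⟨glueRel c Lp Rp a.1 b.1,
        glue_po hmeet a.2.1 b.2.1 hcov, glue_adapted hside a.2.2 b.2.2⟩, ?_⟩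
      have e1 : (Quot.mk _ (resAdOrd hSL ⟨glueRel c Lp Rp a.1 b.1,
          glue_po hmeet a.2.1 b.2.1 hcov, glue_adapted hside a.2.2 b.2.2⟩)
            : QHS (leSub le Lp)) = Quot.mk _ a :=
        (qhs_mk_eq_iff _ _).2 (qhequiv_of_iff (fun x y => glue_resL hmeet a.2.1 x y))
      have e2 : (Quot.mk _ (resAdOrd hSR ⟨glueRel c Lp Rp a.1 b.1,
          glue_po hmeet a.2.1 b.2.1 hcov, glue_adapted hside a.2.2 b.2.2⟩)
            : QHS (leSub le Rp)) = Quot.mk _ b :=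
        (qhs_mk_eq_iff _ _).2 (qhequiv_of_iff (fun x y => glue_resR hmeet b.2.1 x y))
      exact Prod.ext e1 e2
  rw [Nat.card_eq_of_bijective _ hbij, Nat.card_prod]

end CardGlue


section Transport
variable {V W : Type*} {leV : V → V → Prop} {leW : W → W → Prop} (e : V ≃ W)

def mapRel (l : V → V → Prop) : W → W → Prop := fun x y => l (e.symm x) (e.symm y)

theorem mapRel_po {l : V → V → Prop} (hl : IsPartialOrder V l) :
    IsPartialOrder W (mapRel e l) :=
  { refl := fun a => hl.refl _,
    trans := fun a b c hab hbc => hl.trans _ _ _ hab hbc,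
    antisymm := fun a b hab hba => by
      have := hl.antisymm _ _ hab hba
      simpa using congrArg e this }

section Mono
variable (hmono : ∀ a b, leV a b ↔ leW (e a) (e b))
include hmono

theorem mapRel_adapted_mono {l : V → V → Prop} (hl : AdaptedG leV l) :
    AdaptedG leW (mapRel e l) := by
  intro i j hij hn1 hn2
  obtain ⟨k, hk1, hk2, hk3, hk4⟩ := hl (e.symm i) (e.symm j)
    (by rw [hmono]; simpa using hij) hn1 hn2
  refine ⟨e k, ?_, ?_, ?_, ?_⟩
  · rw [hmono (e.symm i) k] at hk1; simpa using hk1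
  · rw [hmono k (e.symm j)] at hk2; simpa using hk2
  · simpa [mapRel] using hk3
  · simpa [mapRel] using hk4

theorem mapRel_dec_mono (l : V → V → Prop) (x y : W) :
    DecRelG leW (mapRel e l) x y ↔ DecRelG leV l (e.symm x) (e.symm y) := by
  unfold DecRelG mapRel
  constructor
  · rintro ⟨h1, h2⟩
    refine ⟨by rw [hmono]; simpa using h1, fun k hk1 hk2 => ?_⟩
    have := h2 (e k) (by rw [hmono (e.symm y) k] at hk1; simpa using hk1)
      (by rw [hmono k (e.symm x)] at hk2; simpa using hk2)
    simpa using this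
  · rintro ⟨h1, h2⟩
    refine ⟨by rw [hmono] at h1; simpa using h1, fun k hk1 hk2 => ?_⟩
    exact h2 (e.symm k) (by rw [hmono]; simpa using hk1) (by rw [hmono]; simpa using hk2)

theorem mapRel_inc_mono (l : V → V → Prop) (x y : W) :
    IncRelG leW (mapRel e l) x y ↔ IncRelG leV l (e.symm x) (e.symm y) := by
  unfold IncRelG mapRel
  constructor
  · rintro ⟨h1, h2⟩
    refine ⟨by rw [hmono]; simpa using h1, fun k hk1 hk2 => ?_⟩
    have := h2 (e k) (by rw [hmono (e.symm x) k] at hk1; simpa using hk1)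
      (by rw [hmono k (e.symm y)] at hk2; simpa using hk2)
    simpa using this
  · rintro ⟨h1, h2⟩
    refine ⟨by rw [hmono] at h1; simpa using h1, fun k hk1 hk2 => ?_⟩
    exact h2 (e.symm k) (by rw [hmono]; simpa using hk1) (by rw [hmono]; simpa using hk2)

def qhsMapMono : QHS leV → QHS leW :=
  Quot.map (fun l => ⟨mapRel e l.1, mapRel_po e l.2.1, mapRel_adapted_mono e hmono l.2.2⟩)
    (fun a b hab =>
      ⟨fun x y => (mapRel_dec_mono e hmono a.1 x y).trans
        ((hab.1 _ _).trans (mapRel_dec_mono e hmono b.1 x y).symm),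
       fun x y => (mapRel_inc_mono e hmono a.1 x y).trans
        ((hab.2 _ _).trans (mapRel_inc_mono e hmono b.1 x y).symm)⟩)

def qhsEquivMono : QHS leV ≃ QHS leW where
  toFun := qhsMapMono e hmono
  invFun := qhsMapMono e.symm (by intro a b; rw [hmono (e.symm a) (e.symm b)]; simp)
  left_inv := by
    intro q
    induction q using Quot.ind with | _ a =>
    exact (qhs_mk_eq_iff _ _).2 (qhequiv_of_iff (by intro x y; simp [mapRel]))
  right_inv := by
    intro q
    induction q using Quot.ind with | _ a =>
    exact (qhs_mk_eq_iff _ _).2 (qhequiv_of_iff (by intro x y; simp [mapRel]))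

theorem card_qhs_congr_mono : Nat.card (QHS leV) = Nat.card (QHS leW) :=
  Nat.card_congr (qhsEquivMono e hmono)

end Mono

section Anti
variable (hanti : ∀ a b, leV a b ↔ leW (e b) (e a))
include hanti

theorem mapRel_adapted_anti {l : V → V → Prop} (hl : AdaptedG leV l) :
    AdaptedG leW (mapRel e l) := by
  intro i j hij hn1 hn2
  obtain ⟨k, hk1, hk2, hk3, hk4⟩ := hl (e.symm j) (e.symm i)
    (by rw [hanti]; simpa using hij) hn2 hn1
  refine ⟨e k, ?_, ?_, ?_, ?_⟩
  · rw [hanti k (e.symm i)] at hk2; simpa using hk2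
  · rw [hanti (e.symm j) k] at hk1; simpa using hk1
  · simpa [mapRel] using hk4
  · simpa [mapRel] using hk3

theorem mapRel_dec_anti (l : V → V → Prop) (x y : W) :
    DecRelG leW (mapRel e l) x y ↔ IncRelG leV l (e.symm x) (e.symm y) := by
  unfold DecRelG IncRelG mapRel
  constructor
  · rintro ⟨h1, h2⟩
    refine ⟨by rw [hanti]; simpa using h1, fun k hk1 hk2 => ?_⟩
    have := h2 (e k) (by rw [hanti k (e.symm y)] at hk2; simpa using hk2)
      (by rw [hanti (e.symm x) k] at hk1; simpa using hk1)
    simpa using this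
  · rintro ⟨h1, h2⟩
    refine ⟨by rw [hanti] at h1; simpa using h1, fun k hk1 hk2 => ?_⟩
    exact h2 (e.symm k) (by rw [hanti]; simpa using hk2) (by rw [hanti]; simpa using hk1)

theorem mapRel_inc_anti (l : V → V → Prop) (x y : W) :
    IncRelG leW (mapRel e l) x y ↔ DecRelG leV l (e.symm x) (e.symm y) := by
  unfold DecRelG IncRelG mapRel
  constructor
  · rintro ⟨h1, h2⟩
    refine ⟨by rw [hanti]; simpa using h1, fun k hk1 hk2 => ?_⟩
    have := h2 (e k) (by rw [hanti k (e.symm x)] at hk2; simpa using hk2)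
      (by rw [hanti (e.symm y) k] at hk1; simpa using hk1)
    simpa using this
  · rintro ⟨h1, h2⟩
    refine ⟨by rw [hanti] at h1; simpa using h1, fun k hk1 hk2 => ?_⟩
    exact h2 (e.symm k) (by rw [hanti]; simpa using hk2) (by rw [hanti]; simpa using hk1)

def qhsMapAnti : QHS leV → QHS leW :=
  Quot.map (fun l => ⟨mapRel e l.1, mapRel_po e l.2.1, mapRel_adapted_anti e hanti l.2.2⟩)
    (fun a b hab =>
      ⟨fun x y => (mapRel_dec_anti e hanti a.1 x y).trans
        ((hab.2 _ _).trans (mapRel_dec_anti e hanti b.1 x y).symm),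
       fun x y => (mapRel_inc_anti e hanti a.1 x y).trans
        ((hab.1 _ _).trans (mapRel_inc_anti e hanti b.1 x y).symm)⟩)

theorem card_qhs_congr_anti : Nat.card (QHS leV) = Nat.card (QHS leW) := by
  have hanti' : ∀ a b, leW a b ↔ leV (e.symm b) (e.symm a) := by
    intro a b; rw [hanti (e.symm b) (e.symm a)]; simp
  refine Nat.card_congr ⟨qhsMapAnti e hanti, qhsMapAnti e.symm hanti', ?_, ?_⟩
  · intro q
    induction q using Quot.ind with | _ a =>
    exact (qhs_mk_eq_iff _ _).2 (qhequiv_of_iff (by intro x y; simp [mapRel]))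
  · intro q
    induction q using Quot.ind with | _ a =>
    exact (qhs_mk_eq_iff _ _).2 (qhequiv_of_iff (by intro x y; simp [mapRel]))

end Anti
end Transport


instance qhsFinite {V : Type*} [Finite V] (le : V → V → Prop) : Finite (QHS le) := by
  unfold QHS AdOrd
  infer_instance

theorem nat_card_sigma {ι : Type*} [Fintype ι] (f : ι → Type*) [∀ i, Finite (f i)] :
    Nat.card (Σ i, f i) = ∑ i, Nat.card (f i) := by
  letI : ∀ i, Fintype (f i) := fun i => Fintype.ofFinite _
  simp [Nat.card_eq_fintype_card, Fintype.card_sigma]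

section Chain
variable {k : ℕ}

def chLe (n : ℕ) : Fin n → Fin n → Prop := fun a b => a ≤ b

theorem chLe_po (n : ℕ) : IsPartialOrder (Fin n) (chLe n) :=
  { refl := fun a => le_refl a,
    trans := fun a b c hab hbc => le_trans hab hbc,
    antisymm := fun a b hab hba => le_antisymm hab hba }

noncomputable def chainCard (n : ℕ) : ℕ := Nat.card (QHS (chLe n))

variable (m : Fin (k + 1))

def Bp : Fin (k + 1) → Prop := fun x => x.val < m.val
def Ap : Fin (k + 1) → Prop := fun x => m.val < x.val

def eB : {x : Fin (k + 1) // Bp m x} ≃ Fin m.val where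
  toFun x := ⟨x.1.val, x.2⟩
  invFun i := ⟨⟨i.val, by have h1 := i.isLt; have h2 := m.isLt; omega⟩, i.isLt⟩
  left_inv x := Subtype.ext (Fin.ext rfl)
  right_inv i := Fin.ext rfl

def eA : {x : Fin (k + 1) // Ap m x} ≃ Fin (k - m.val) where
  toFun x := ⟨x.1.val - (m.val + 1), by have h1 := x.1.isLt; have h2 : m.val < x.1.val := x.2; omega⟩
  invFun i := ⟨⟨m.val + 1 + i.val, by have h1 := i.isLt; omega⟩,
    show m.val < m.val + 1 + i.val by omega⟩
  left_inv x := Subtype.ext (Fin.ext (by have := x.2; simp [Ap] at this ⊢; omega))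
  right_inv i := Fin.ext (by simp)

theorem hB : ∀ a b : {x : Fin (k + 1) // Bp m x},
    leSub (chLe (k + 1)) (Bp m) a b ↔ chLe m.val (eB m a) (eB m b) :=
  fun _ _ => Iff.rfl

theorem hA : ∀ a b : {x : Fin (k + 1) // Ap m x},
    leSub (chLe (k + 1)) (Ap m) a b ↔ chLe (k - m.val) (eA m a) (eA m b) := by
  intro a b
  have h1 := a.2
  have h2 := b.2
  show a.1.val ≤ b.1.val ↔ a.1.val - (m.val + 1) ≤ b.1.val - (m.val + 1)
  simp [Ap] at h1 h2
  omega

theorem hSB : ∀ x j y, Bp m x → Bp m y → chLe (k + 1) x j → chLe (k + 1) j y → Bp m j := by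
  intro x j y hx hy h1 h2
  simp only [Bp] at *
  have : j.val ≤ y.val := h2
  omega

theorem hSA : ∀ x j y, Ap m x → Ap m y → chLe (k + 1) x j → chLe (k + 1) j y → Ap m j := by
  intro x j y hx hy h1 h2
  simp only [Ap] at *
  have : x.val ≤ j.val := h1
  omega

theorem chain_exists_top (l : AdOrd (chLe (k + 1))) : ∃ mm : Fin (k + 1), ∀ x, l.1 x mm := by
  have hdir : ∀ x y, ∃ z, l.1 x z ∧ l.1 y z := by
    intro x y
    by_cases h1 : l.1 x y
    · exact ⟨y, h1, l.2.1.refl y⟩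
    by_cases h2 : l.1 y x
    · exact ⟨x, l.2.1.refl x, h2⟩
    rcases le_total x y with h | h
    · obtain ⟨z, _, _, hz1, hz2⟩ := l.2.2 x y h h1 h2
      exact ⟨z, hz1, hz2⟩
    · obtain ⟨z, _, _, hz1, hz2⟩ := l.2.2 y x h h2 h1
      exact ⟨z, hz2, hz1⟩
  have hlist : ∀ L : List (Fin (k + 1)), ∃ z, ∀ x ∈ L, l.1 x z := by
    intro L
    induction L with
    | nil => exact ⟨⟨0, Nat.succ_pos k⟩, by simp⟩
    | cons a L ih =>
      obtain ⟨z, hz⟩ := ih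
      obtain ⟨w, hw1, hw2⟩ := hdir a z
      refine ⟨w, ?_⟩
      intro x hx
      rcases List.mem_cons.1 hx with h | h
      · exact h ▸ hw1
      · exact l.2.1.trans _ _ _ (hz x h) hw2
  obtain ⟨z, hz⟩ := hlist (List.finRange (k + 1))
  exact ⟨z, fun x => hz x (List.mem_finRange x)⟩

noncomputable def mxF (l : AdOrd (chLe (k + 1))) : Fin (k + 1) :=
  Classical.choose (chain_exists_top l)

theorem mxF_spec (l : AdOrd (chLe (k + 1))) : ∀ x, l.1 x (mxF l) :=
  Classical.choose_spec (chain_exists_top l)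

theorem chainTopUnique {l : AdOrd (chLe (k + 1))} {m₁ m₂ : Fin (k + 1)}
    (h1 : ∀ x, l.1 x m₁) (h2 : ∀ x, l.1 x m₂) : m₁ = m₂ :=
  l.2.1.antisymm _ _ (h2 m₁) (h1 m₂)

theorem top_equiv {a b : AdOrd (chLe (k + 1))} (hab : QHEquivG (chLe (k + 1)) a.1 b.1)
    {mm : Fin (k + 1)} (ha : ∀ x, a.1 x mm) : ∀ x, b.1 x mm := by
  have hdec : DecRelG (chLe (k + 1)) a.1 (Fin.last k) mm :=
    ⟨Fin.le_last mm, fun j _ _ => ha j⟩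
  have hinc : IncRelG (chLe (k + 1)) a.1 ⟨0, Nat.succ_pos k⟩ mm :=
    ⟨Fin.mk_le_of_le_val (Nat.zero_le _), fun j _ _ => ha j⟩
  have hdec' := (hab.1 _ _).1 hdec
  have hinc' := (hab.2 _ _).1 hinc
  intro x
  rcases le_total x mm with h | h
  · exact hinc'.2 x (Fin.mk_le_of_le_val (Nat.zero_le _)) h
  · exact hdec'.2 x h (Fin.le_last x)

theorem mxF_congr {a b : AdOrd (chLe (k + 1))} (hab : QHEquivG (chLe (k + 1)) a.1 b.1) :
    mxF a = mxF b :=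
  chainTopUnique (top_equiv hab (mxF_spec a)) (mxF_spec b)

noncomputable def gPair (l : AdOrd (chLe (k + 1))) (m : Fin (k + 1)) :
    QHS (chLe m.val) × QHS (chLe (k - m.val)) :=
  (qhsEquivMono (eB m) (hB m) (Quot.mk _ (resAdOrd (hSB m) l)),
   qhsEquivMono (eA m) (hA m) (Quot.mk _ (resAdOrd (hSA m) l)))

theorem gPair_congr {a b : AdOrd (chLe (k + 1))} (hab : QHEquivG (chLe (k + 1)) a.1 b.1)
    (m : Fin (k + 1)) : gPair a m = gPair b m := by
  have e1 : (Quot.mk _ (resAdOrd (hSB m) a) : QHS (leSub (chLe (k + 1)) (Bp m))) =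
      Quot.mk _ (resAdOrd (hSB m) b) :=
    (qhs_mk_eq_iff _ _).2 ⟨fun x y => (res_dec (hSB m) a.1 x y).trans
        ((hab.1 _ _).trans (res_dec (hSB m) b.1 x y).symm),
      fun x y => (res_inc (hSB m) a.1 x y).trans
        ((hab.2 _ _).trans (res_inc (hSB m) b.1 x y).symm)⟩
  have e2 : (Quot.mk _ (resAdOrd (hSA m) a) : QHS (leSub (chLe (k + 1)) (Ap m))) =
      Quot.mk _ (resAdOrd (hSA m) b) :=
    (qhs_mk_eq_iff _ _).2 ⟨fun x y => (res_dec (hSA m) a.1 x y).trans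
        ((hab.1 _ _).trans (res_dec (hSA m) b.1 x y).symm),
      fun x y => (res_inc (hSA m) a.1 x y).trans
        ((hab.2 _ _).trans (res_inc (hSA m) b.1 x y).symm)⟩
  unfold gPair
  rw [e1, e2]

noncomputable def chF :
    QHS (chLe (k + 1)) → Σ m : Fin (k + 1), QHS (chLe m.val) × QHS (chLe (k - m.val)) :=
  Quot.lift (fun l => ⟨mxF l, gPair l (mxF l)⟩) (by
    intro a b hab
    have hm : mxF a = mxF b := mxF_congr hab
    have hg := gPair_congr hab (mxF a)
    show (⟨mxF a, gPair a (mxF a)⟩ :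
        Σ mm : Fin (k + 1), QHS (chLe mm.val) × QHS (chLe (k - mm.val))) =
      ⟨mxF b, gPair b (mxF b)⟩
    rw [hg, hm])

theorem chF_inj : Function.Injective (chF (k := k)) := by
  intro q q'
  induction q using Quot.ind with | _ a =>
  induction q' using Quot.ind with | _ b =>
  intro h
  have hm : mxF a = mxF b := congrArg Sigma.fst h
  have hb_top : ∀ x, b.1 x (mxF a) := by rw [hm]; exact mxF_spec b
  have ha_top := mxF_spec a
  have h2 : HEq (gPair a (mxF a)) (gPair b (mxF b)) := (Sigma.ext_iff.1 h).2
  rw [← hm] at h2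
  have h2' : gPair a (mxF a) = gPair b (mxF a) := eq_of_heq h2
  set m := mxF a with hmdef
  have e1 : (Quot.mk _ (resAdOrd (hSB m) a) : QHS (leSub (chLe (k + 1)) (Bp m))) =
      Quot.mk _ (resAdOrd (hSB m) b) :=
    (qhsEquivMono (eB m) (hB m)).injective (congrArg Prod.fst h2')
  have e2 : (Quot.mk _ (resAdOrd (hSA m) a) : QHS (leSub (chLe (k + 1)) (Ap m))) =
      Quot.mk _ (resAdOrd (hSA m) b) :=
    (qhsEquivMono (eA m) (hA m)).injective (congrArg Prod.snd h2')
  have q1 := (qhs_mk_eq_iff _ _).1 e1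
  have q2 := (qhs_mk_eq_iff _ _).1 e2
  apply Quot.sound
  constructor
  · intro x y
    by_cases hyx : chLe (k + 1) y x
    swap
    · exact iff_of_false (fun h => hyx h.1) (fun h => hyx h.1)
    have hyx' : y.val ≤ x.val := hyx
    rcases Nat.lt_trichotomy y.val m.val with hy | hy | hy
    · by_cases hx : x.val < m.val
      · exact (res_dec (hSB m) a.1 ⟨x, hx⟩ ⟨y, hy⟩).symm.trans
          ((q1.1 ⟨x, hx⟩ ⟨y, hy⟩).trans (res_dec (hSB m) b.1 ⟨x, hx⟩ ⟨y, hy⟩))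
      · refine iff_of_false ?_ ?_
        · intro hD
          have h1 : a.1 m y := hD.2 m (show y.val ≤ m.val by omega) (show m.val ≤ x.val by omega)
          have h3 := congrArg Fin.val (a.2.1.antisymm y m (ha_top y) h1)
          omega
        · intro hD
          have h1 : b.1 m y := hD.2 m (show y.val ≤ m.val by omega) (show m.val ≤ x.val by omega)
          have h3 := congrArg Fin.val (b.2.1.antisymm y m (hb_top y) h1)
          omega
    · have hym : y = m := Fin.ext hy
      subst hym
      exact iff_of_true ⟨hyx, fun j _ _ => ha_top j⟩ ⟨hyx, fun j _ _ => hb_top j⟩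
    · have hx : m.val < x.val := by omega
      exact (res_dec (hSA m) a.1 ⟨x, hx⟩ ⟨y, hy⟩).symm.trans
        ((q2.1 ⟨x, hx⟩ ⟨y, hy⟩).trans (res_dec (hSA m) b.1 ⟨x, hx⟩ ⟨y, hy⟩))
  · intro x y
    by_cases hxy : chLe (k + 1) x y
    swap
    · exact iff_of_false (fun h => hxy h.1) (fun h => hxy h.1)
    have hxy' : x.val ≤ y.val := hxy
    rcases Nat.lt_trichotomy y.val m.val with hy | hy | hy
    · have hx : x.val < m.val := by omega
      exact (res_inc (hSB m) a.1 ⟨x, hx⟩ ⟨y, hy⟩).symm.trans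
        ((q1.2 ⟨x, hx⟩ ⟨y, hy⟩).trans (res_inc (hSB m) b.1 ⟨x, hx⟩ ⟨y, hy⟩))
    · have hym : y = m := Fin.ext hy
      subst hym
      exact iff_of_true ⟨hxy, fun j _ _ => ha_top j⟩ ⟨hxy, fun j _ _ => hb_top j⟩
    · by_cases hx : m.val < x.val
      · exact (res_inc (hSA m) a.1 ⟨x, hx⟩ ⟨y, hy⟩).symm.trans
          ((q2.2 ⟨x, hx⟩ ⟨y, hy⟩).trans (res_inc (hSA m) b.1 ⟨x, hx⟩ ⟨y, hy⟩))
      · refine iff_of_false ?_ ?_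
        · intro hI
          have h1 : a.1 m y := hI.2 m (show x.val ≤ m.val by omega) (show m.val ≤ y.val by omega)
          have h3 := congrArg Fin.val (a.2.1.antisymm y m (ha_top y) h1)
          omega
        · intro hI
          have h1 : b.1 m y := hI.2 m (show x.val ≤ m.val by omega) (show m.val ≤ y.val by omega)
          have h3 := congrArg Fin.val (b.2.1.antisymm y m (hb_top y) h1)
          omega

def chGlue (r₁ : {x : Fin (k + 1) // Bp m x} → {x : Fin (k + 1) // Bp m x} → Prop)
    (r₂ : {x : Fin (k + 1) // Ap m x} → {x : Fin (k + 1) // Ap m x} → Prop) :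
    Fin (k + 1) → Fin (k + 1) → Prop :=
  fun x y => grel (Bp m) r₁ x y ∨ grel (Ap m) r₂ x y ∨ y = m

variable {r₁ : {x : Fin (k + 1) // Bp m x} → {x : Fin (k + 1) // Bp m x} → Prop}
  {r₂ : {x : Fin (k + 1) // Ap m x} → {x : Fin (k + 1) // Ap m x} → Prop}

theorem chGlue_po (hr₁ : IsPartialOrder _ r₁) (hr₂ : IsPartialOrder _ r₂) :
    IsPartialOrder (Fin (k + 1)) (chGlue m r₁ r₂) :=
  { refl := fun x => by
      rcases Nat.lt_trichotomy x.val m.val with h | h | h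
      · exact Or.inl (grel_refl hr₁ h)
      · exact Or.inr (Or.inr (Fin.ext h))
      · exact Or.inr (Or.inl (grel_refl hr₂ h)),
    trans := by
      intro x y z h1 h2
      rcases h2 with h2 | h2 | h2
      · rcases h1 with h1 | h1 | h1
        · exact Or.inl (grel_trans hr₁ h1 h2)
        · exfalso
          have hA0 := grel_snd h1
          have hA : m.val < y.val := hA0
          have hB0 := grel_fst h2
          have hB : y.val < m.val := hB0
          omega
        · exfalso
          subst h1
          have hB0 := grel_fst h2
          have hB : y.val < y.val := hB0
          omega
      · rcases h1 with h1 | h1 | h1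
        · exfalso
          have hA0 := grel_snd h1
          have hA : y.val < m.val := hA0
          have hB0 := grel_fst h2
          have hB : m.val < y.val := hB0
          omega
        · exact Or.inr (Or.inl (grel_trans hr₂ h1 h2))
        · exfalso
          subst h1
          have hB0 := grel_fst h2
          have hB : y.val < y.val := hB0
          omega
      · exact Or.inr (Or.inr h2),
    antisymm := by
      intro x y h1 h2
      rcases h1 with h1 | h1 | h1 <;> rcases h2 with h2 | h2 | h2
      · exact grel_antisymm hr₁ h1 h2
      · exfalso
        have hA0 := grel_fst h1
        have hA : x.val < m.val := hA0
        have hB0 := grel_snd h2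
        have hB : m.val < x.val := hB0
        omega
      · exfalso
        have hA0 := grel_fst h1
        have hA : x.val < m.val := hA0
        subst h2
        omega
      · exfalso
        have hA0 := grel_fst h1
        have hA : m.val < x.val := hA0
        have hB0 := grel_snd h2
        have hB : x.val < m.val := hB0
        omega
      · exact grel_antisymm hr₂ h1 h2
      · exfalso
        have hA0 := grel_fst h1
        have hA : m.val < x.val := hA0
        subst h2
        omega
      · exfalso
        have hA0 := grel_fst h2
        have hA : y.val < m.val := hA0
        subst h1
        omega
      · exfalso
        have hA0 := grel_fst h2
        have hA : m.val < y.val := hA0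
        subst h1
        omega
      · rw [h1, h2] }

theorem chGlue_adapted (ha₁ : AdaptedG (leSub (chLe (k + 1)) (Bp m)) r₁)
    (ha₂ : AdaptedG (leSub (chLe (k + 1)) (Ap m)) r₂) :
    AdaptedG (chLe (k + 1)) (chGlue m r₁ r₂) := by
  intro i j hij hn1 hn2
  have hij' : i.val ≤ j.val := hij
  by_cases hj : j.val < m.val
  · have hi : i.val < m.val := by omega
    obtain ⟨kk, h1, h2, h3, h4⟩ := ha₁ ⟨i, hi⟩ ⟨j, hj⟩ hij
      (fun h => hn1 (Or.inl ((grel_iff r₁ ⟨i, hi⟩ ⟨j, hj⟩).2 h)))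
      (fun h => hn2 (Or.inl ((grel_iff r₁ ⟨j, hj⟩ ⟨i, hi⟩).2 h)))
    exact ⟨kk.1, h1, h2, Or.inl ((grel_iff r₁ ⟨i, hi⟩ kk).2 h3),
      Or.inl ((grel_iff r₁ ⟨j, hj⟩ kk).2 h4)⟩
  · by_cases hi : m.val < i.val
    · have hj' : m.val < j.val := by omega
      obtain ⟨kk, h1, h2, h3, h4⟩ := ha₂ ⟨i, hi⟩ ⟨j, hj'⟩ hij
        (fun h => hn1 (Or.inr (Or.inl ((grel_iff r₂ ⟨i, hi⟩ ⟨j, hj'⟩).2 h))))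
        (fun h => hn2 (Or.inr (Or.inl ((grel_iff r₂ ⟨j, hj'⟩ ⟨i, hi⟩).2 h))))
      exact ⟨kk.1, h1, h2, Or.inr (Or.inl ((grel_iff r₂ ⟨i, hi⟩ kk).2 h3)),
        Or.inr (Or.inl ((grel_iff r₂ ⟨j, hj'⟩ kk).2 h4))⟩
    · exact ⟨m, show i.val ≤ m.val by omega, show m.val ≤ j.val by omega,
        Or.inr (Or.inr rfl), Or.inr (Or.inr rfl)⟩

theorem chGlue_resB : ∀ a b : {x : Fin (k + 1) // Bp m x},
    resRel (Bp m) (chGlue m r₁ r₂) a b ↔ r₁ a b := by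
  intro a b
  constructor
  · rintro (h | h | h)
    · exact (grel_iff r₁ a b).1 h
    · exfalso
      have h10 := grel_fst h
      have h1 : m.val < a.1.val := h10
      have h2 : a.1.val < m.val := a.2
      omega
    · exfalso
      have h2 : b.1.val < m.val := b.2
      rw [h] at h2
      omega
  · intro h
    exact Or.inl ((grel_iff r₁ a b).2 h)

theorem chGlue_resA : ∀ a b : {x : Fin (k + 1) // Ap m x},
    resRel (Ap m) (chGlue m r₁ r₂) a b ↔ r₂ a b := by
  intro a b
  constructor
  · rintro (h | h | h)
    · exfalso
      have h10 := grel_fst h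
      have h1 : a.1.val < m.val := h10
      have h2 : m.val < a.1.val := a.2
      omega
    · exact (grel_iff r₂ a b).1 h
    · exfalso
      have h2 : m.val < b.1.val := b.2
      rw [h] at h2
      omega
  · intro h
    exact Or.inr (Or.inl ((grel_iff r₂ a b).2 h))

theorem chF_surj : Function.Surjective (chF (k := k)) := by
  rintro ⟨m, q1, q2⟩
  induction q1 using Quot.ind with | _ a₁ =>
  induction q2 using Quot.ind with | _ a₂ =>
  have hB' : ∀ a b : Fin m.val, chLe m.val a b ↔
      leSub (chLe (k + 1)) (Bp m) ((eB m).symm a) ((eB m).symm b) := fun a b => Iff.rfl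
  have hA' : ∀ a b : Fin (k - m.val), chLe (k - m.val) a b ↔
      leSub (chLe (k + 1)) (Ap m) ((eA m).symm a) ((eA m).symm b) := by
    intro a b
    show a.val ≤ b.val ↔ m.val + 1 + a.val ≤ m.val + 1 + b.val
    omega
  set r₁ := mapRel (eB m).symm a₁.1 with hr₁def
  set r₂ := mapRel (eA m).symm a₂.1 with hr₂def
  have pr₁ : IsPartialOrder _ r₁ := mapRel_po (eB m).symm a₁.2.1
  have pr₂ : IsPartialOrder _ r₂ := mapRel_po (eA m).symm a₂.2.1
  have ar₁ : AdaptedG (leSub (chLe (k + 1)) (Bp m)) r₁ :=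
    mapRel_adapted_mono (eB m).symm hB' a₁.2.2
  have ar₂ : AdaptedG (leSub (chLe (k + 1)) (Ap m)) r₂ :=
    mapRel_adapted_mono (eA m).symm hA' a₂.2.2
  refine ⟨Quot.mk _ ⟨chGlue m r₁ r₂, chGlue_po m pr₁ pr₂, chGlue_adapted m ar₁ ar₂⟩, ?_⟩
  have hmx : mxF ⟨chGlue m r₁ r₂, chGlue_po m pr₁ pr₂, chGlue_adapted m ar₁ ar₂⟩ = m :=
    chainTopUnique (mxF_spec _) (fun x => Or.inr (Or.inr rfl))
  show (⟨mxF ⟨chGlue m r₁ r₂, chGlue_po m pr₁ pr₂, chGlue_adapted m ar₁ ar₂⟩,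
      gPair ⟨chGlue m r₁ r₂, chGlue_po m pr₁ pr₂, chGlue_adapted m ar₁ ar₂⟩
        (mxF ⟨chGlue m r₁ r₂, chGlue_po m pr₁ pr₂, chGlue_adapted m ar₁ ar₂⟩)⟩ :
      Σ mm : Fin (k + 1), QHS (chLe mm.val) × QHS (chLe (k - mm.val))) =
    ⟨m, (Quot.mk _ a₁, Quot.mk _ a₂)⟩
  rw [hmx]
  refine congrArg (Sigma.mk m) (Prod.ext ?_ ?_)
  · have step : (Quot.mk _ (resAdOrd (hSB m)
        ⟨chGlue m r₁ r₂, chGlue_po m pr₁ pr₂, chGlue_adapted m ar₁ ar₂⟩)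
          : QHS (leSub (chLe (k + 1)) (Bp m))) =
        (qhsEquivMono (eB m) (hB m)).symm (Quot.mk _ a₁) :=
      (qhs_mk_eq_iff _ _).2 (qhequiv_of_iff (fun x y => chGlue_resB m x y))
    show qhsEquivMono (eB m) (hB m) _ = _
    rw [step]; exact (qhsEquivMono (eB m) (hB m)).apply_symm_apply _
  · have step : (Quot.mk _ (resAdOrd (hSA m)
        ⟨chGlue m r₁ r₂, chGlue_po m pr₁ pr₂, chGlue_adapted m ar₁ ar₂⟩)
          : QHS (leSub (chLe (k + 1)) (Ap m))) =
        (qhsEquivMono (eA m) (hA m)).symm (Quot.mk _ a₂) :=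
      (qhs_mk_eq_iff _ _).2 (qhequiv_of_iff (fun x y => chGlue_resA m x y))
    show qhsEquivMono (eA m) (hA m) _ = _
    rw [step]; exact (qhsEquivMono (eA m) (hA m)).apply_symm_apply _

theorem chainCard_zero : chainCard 0 = 1 := by
  have po : IsPartialOrder (Fin 0) (fun _ _ => True) :=
    { refl := fun a => trivial,
      trans := fun _ _ _ _ _ => trivial,
      antisymm := fun a => a.elim0 }
  have ad : AdaptedG (chLe 0) (fun _ _ => True) := fun i => i.elim0
  haveI : Unique (QHS (chLe 0)) :=
    { default := Quot.mk _ ⟨fun _ _ => True, po, ad⟩,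
      uniq := by
        intro q
        induction q using Quot.ind with | _ a =>
        exact Quot.sound (qhequiv_of_iff (fun x => x.elim0)) }
  exact Nat.card_unique

theorem chainCard_succ :
    chainCard (k + 1) = ∑ i : Fin (k + 1), chainCard i.val * chainCard (k - i.val) := by
  have hbij : Function.Bijective (chF (k := k)) := ⟨chF_inj, chF_surj⟩
  unfold chainCard
  rw [Nat.card_eq_of_bijective _ hbij,
    nat_card_sigma (fun m : Fin (k + 1) => QHS (chLe m.val) × QHS (chLe (k - m.val)))]
  exact Finset.sum_congr rfl (fun i _ => Nat.card_prod _ _)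

theorem chainCard_eq_catalan : ∀ n, chainCard n = catalan n := by
  intro n
  induction n using Nat.strong_induction_on with
  | _ n ih =>
    cases n with
    | zero => rw [chainCard_zero, catalan_zero]
    | succ k =>
      rw [chainCard_succ, catalan_succ]
      refine Finset.sum_congr rfl ?_
      intro i _
      have hik : i.val < k + 1 := i.isLt
      rw [ih i.val (by omega), ih (k - i.val) (by omega)]

end Chain

theorem cutPt_zero (ns : List ℕ) : cutPt ns 0 = 0 := rfl

theorem cutPt_cons (a : ℕ) (l : List ℕ) (t : ℕ) :
    cutPt (a :: l) (t + 1) = (a - 1) + cutPt l t := by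
  simp [cutPt, List.take_succ_cons]

section Quiver
variable {n : ℕ} {o : ℕ → Bool}

def Seg (n : ℕ) (o : ℕ → Bool) (x y : Fin n) : Prop :=
  (x.val ≤ y.val ∧ ∀ e, x.val ≤ e → e < y.val → o e = true) ∨
  (y.val ≤ x.val ∧ ∀ e, y.val ≤ e → e < x.val → o e = false)

theorem rtg_iff_seg (x y : Fin n) :
    Relation.ReflTransGen (lineArrow n o) x y ↔ Seg n o x y := by
  constructor
  · intro h
    induction h using Relation.ReflTransGen.head_induction_on with
    | refl => exact Or.inl ⟨le_rfl, fun e h1 h2 => absurd h2 (by omega)⟩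
    | head harr _ ih =>
      rename_i a b _
      rcases harr with ⟨hab, hoa⟩ | ⟨hab, hob⟩
      · rcases ih with ⟨h1, h2⟩ | ⟨h1, h2⟩
        · refine Or.inl ⟨by omega, fun e he1 he2 => ?_⟩
          rcases Nat.eq_or_lt_of_le he1 with he | he
          · rw [← he]; exact hoa
          · exact h2 e (by omega) he2
        · rcases Nat.eq_or_lt_of_le h1 with he | he
          · refine Or.inl ⟨by omega, fun e he1 he2 => ?_⟩
            have : e = a.val := by omega
            rw [this]; exact hoa
          · exact absurd (h2 a.val (by omega) (by omega)) (by simp [hoa])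
      · rcases ih with ⟨h1, h2⟩ | ⟨h1, h2⟩
        · rcases Nat.eq_or_lt_of_le h1 with he | he
          · refine Or.inr ⟨by omega, fun e he1 he2 => ?_⟩
            have : e = b.val := by omega
            rw [this]; exact hob
          · exact absurd (h2 b.val (by omega) (by omega)) (by simp [hob])
        · refine Or.inr ⟨by omega, fun e he1 he2 => ?_⟩
          by_cases heb : e = b.val
          · rw [heb]; exact hob
          · exact h2 e he1 (by omega)
  · have fwd : ∀ d, ∀ x y : Fin n, x.val + d = y.val →
        (∀ e, x.val ≤ e → e < y.val → o e = true) →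
        Relation.ReflTransGen (lineArrow n o) x y := by
      intro d
      induction d with
      | zero =>
        intro x y h _
        have : x = y := Fin.ext (by omega)
        rw [this]
      | succ d ih =>
        intro x y h hall
        have hx1 : x.val + 1 < n := by have := y.isLt; omega
        exact Relation.ReflTransGen.head
          (Or.inl ⟨rfl, hall x.val le_rfl (by omega)⟩)
          (ih ⟨x.val + 1, hx1⟩ y (by simp; omega) (fun e he1 he2 => hall e (by simp at he1; omega) he2))
    have bwd : ∀ d, ∀ x y : Fin n, y.val + d = x.val →
        (∀ e, y.val ≤ e → e < x.val → o e = false) →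
        Relation.ReflTransGen (lineArrow n o) x y := by
      intro d
      induction d with
      | zero =>
        intro x y h _
        have : x = y := Fin.ext (by omega)
        rw [this]
      | succ d ih =>
        intro x y h hall
        have hx1 : x.val - 1 < n := by have := x.isLt; omega
        refine Relation.ReflTransGen.head
          (Or.inr ⟨by simp; omega, hall (x.val - 1) (by omega) (by omega)⟩)
          (ih ⟨x.val - 1, hx1⟩ y (by simp; omega) (fun e he1 he2 => hall e he1 (by simp at he2; omega)))
    rintro (⟨h1, h2⟩ | ⟨h1, h2⟩)
    · exact fwd (y.val - x.val) x y (by omega) h2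
    · exact bwd (x.val - y.val) x y (by omega) h2

theorem rtg_po : IsPartialOrder (Fin n) (Relation.ReflTransGen (lineArrow n o)) :=
  { refl := fun _ => Relation.ReflTransGen.refl,
    trans := fun _ _ _ h1 h2 => Relation.ReflTransGen.trans h1 h2,
    antisymm := by
      intro x y h1 h2
      rw [rtg_iff_seg] at h1 h2
      rcases h1 with ⟨ha, hb⟩ | ⟨ha, hb⟩ <;> rcases h2 with ⟨hc, hd⟩ | ⟨hc, hd⟩
      · exact Fin.ext (by omega)
      · by_cases hxy : x.val = y.val
        · exact Fin.ext hxy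
        · exact absurd ((hb x.val le_rfl (by omega)).symm.trans (hd x.val le_rfl (by omega)))
            (by simp)
      · by_cases hxy : x.val = y.val
        · exact Fin.ext hxy
        · exact absurd ((hd y.val le_rfl (by omega)).symm.trans (hb y.val le_rfl (by omega)))
            (by simp)
      · exact Fin.ext (by omega) }

theorem card_const_seg (hconst : ∀ e, e < n - 1 → o e = o 0) :
    Nat.card (QHS (Relation.ReflTransGen (lineArrow n o))) = catalan n := by
  rw [← chainCard_eq_catalan n]
  by_cases ho : o 0 = true
  · refine card_qhs_congr_mono (Equiv.refl (Fin n)) ?_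
    intro a b
    rw [rtg_iff_seg]
    show Seg n o a b ↔ a ≤ b
    constructor
    · rintro (⟨h1, h2⟩ | ⟨h1, h2⟩)
      · exact h1
      · rcases Nat.eq_or_lt_of_le h1 with he | he
        · show a.val ≤ b.val; omega
        · have hb := b.isLt
          have := (h2 b.val le_rfl (by omega)).symm.trans (hconst b.val (by omega))
          rw [ho] at this
          exact absurd this (by simp)
    · intro h
      exact Or.inl ⟨h, fun e he1 he2 => by
        have hb := b.isLt
        rw [hconst e (by omega), ho]⟩
  · simp only [Bool.not_eq_true] at ho
    refine card_qhs_congr_anti (Equiv.refl (Fin n)) ?_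
    intro a b
    rw [rtg_iff_seg]
    show Seg n o a b ↔ b ≤ a
    constructor
    · rintro (⟨h1, h2⟩ | ⟨h1, h2⟩)
      · rcases Nat.eq_or_lt_of_le h1 with he | he
        · show b.val ≤ a.val; omega
        · have hb := b.isLt
          have := (h2 a.val le_rfl (by omega)).symm.trans (hconst a.val (by omega))
          rw [ho] at this
          exact absurd this (by simp)
      · exact h1
    · intro h
      exact Or.inr ⟨h, fun e he1 he2 => by
        have ha := a.isLt
        rw [hconst e (by omega), ho]⟩

end Quiver

def eSplitL (n c : ℕ) (h : c + 1 ≤ n) : {x : Fin n // x.val ≤ c} ≃ Fin (c + 1) where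
  toFun x := ⟨x.1.val, by have h2 := x.2; omega⟩
  invFun i := ⟨⟨i.val, by have := i.isLt; omega⟩, show i.val ≤ c by have := i.isLt; omega⟩
  left_inv x := Subtype.ext (Fin.ext rfl)
  right_inv i := Fin.ext rfl

def eSplitR (n c : ℕ) : {x : Fin n // c ≤ x.val} ≃ Fin (n - c) where
  toFun x := ⟨x.1.val - c, by have h1 := x.1.isLt; have h2 := x.2; omega⟩
  invFun i := ⟨⟨i.val + c, by have := i.isLt; omega⟩, show c ≤ i.val + c by omega⟩
  left_inv x := Subtype.ext (Fin.ext (by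
    have h2 : c ≤ x.1.val := x.2
    show x.1.val - c + c = x.1.val
    omega))
  right_inv i := Fin.ext (by show i.val + c - c = i.val; omega)

theorem main_count : ∀ (len : ℕ) (ns : List ℕ) (n : ℕ) (o : ℕ → Bool),
    ns.length ≤ len → ns ≠ [] → (∀ m ∈ ns, 1 ≤ m) →
    ((ns.map fun m => m - 1).sum + 1 = n) →
    (∀ t e₁ e₂ : ℕ, cutPt ns t ≤ e₁ → e₁ < cutPt ns (t + 1) →
      cutPt ns t ≤ e₂ → e₂ < cutPt ns (t + 1) → o e₁ = o e₂) →
    (∀ t, t + 1 < ns.length → o (cutPt ns (t + 1) - 1) ≠ o (cutPt ns (t + 1))) →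
    Nat.card (QHS (Relation.ReflTransGen (lineArrow n o))) = (ns.map catalan).prod := by
  intro len
  induction len with
  | zero =>
    intro ns n o hlen hne _ _ _ _
    exact absurd (List.length_eq_zero_iff.1 (Nat.le_zero.1 hlen)) hne
  | succ len ih =>
    rintro (_ | ⟨m, rest⟩) n o hlen hne hpos hsum hconst hflip
    · exact absurd rfl hne
    rcases rest with _ | ⟨m', rest'⟩
    · -- single segment
      have hm1 : 1 ≤ m := hpos m (by simp)
      have hnm : n = m := by simp at hsum; omega
      subst hnm
      have hc1 : cutPt [n] 1 = n - 1 := by simp [cutPt_cons, cutPt_zero]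
      rw [card_const_seg (fun e he => hconst 0 e 0 (by simp [cutPt_zero])
        (by rw [hc1]; omega) (by simp [cutPt_zero]) (by rw [hc1]; omega))]
      simp
    · have hm1 : 1 ≤ m := hpos m (by simp)
      have hm'1 : 1 ≤ m' := hpos m' (by simp)
      by_cases hm : m = 1
      · -- leading 1: hypotheses are contradictory
        subst hm
        have hc1 : cutPt (1 :: m' :: rest') 1 = 0 := by simp [cutPt_cons, cutPt_zero]
        have := hflip 0 (by simp)
        rw [hc1] at this
        exact absurd rfl this
      by_cases hm' : m' = 1
      · -- remove the middle 1
        subst hm'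
        have hEq : ∀ s, cutPt (m :: 1 :: rest') (s + 2) = cutPt (m :: rest') (s + 1) := by
          intro s
          rw [cutPt_cons, cutPt_cons, cutPt_cons]
          omega
        have hc1 : cutPt (m :: 1 :: rest') 1 = m - 1 := by
          simp [cutPt_cons, cutPt_zero]
        have hc1' : cutPt (m :: rest') 1 = m - 1 := by
          simp [cutPt_cons, cutPt_zero]
        have := ih (m :: rest') n o (by simp at hlen ⊢; omega) (by simp)
          (by intro x hx; rcases List.mem_cons.1 hx with h | h
              · exact hpos x (by simp [h])
              · exact hpos x (by simp [h]))
          (by simp at hsum ⊢; omega)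
          (by
            intro t e1 e2 h1 h2 h3 h4
            cases t with
            | zero =>
              rw [cutPt_zero] at h1 h3
              rw [hc1'] at h2 h4
              exact hconst 0 e1 e2 (by simp [cutPt_zero]) (by rw [hc1]; omega)
                (by simp [cutPt_zero]) (by rw [hc1]; omega)
            | succ s =>
              rw [← hEq s] at h1 h3
              rw [← hEq (s + 1)] at h2 h4
              exact hconst (s + 2) e1 e2 h1 h2 h3 h4)
          (by
            intro t ht
            cases t with
            | zero =>
              rw [hc1']
              have := hflip 0 (by simp)
              rwa [hc1] at this
            | succ s =>
              rw [← hEq (s + 1)]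
              exact hflip (s + 2) (by simp at ht ⊢; omega))
        rw [this]
        simp [catalan_one]
      · -- genuine split at c = m - 1
        have hm2 : 2 ≤ m := by omega
        have hm'2 : 2 ≤ m' := by omega
        set c := m - 1 with hcdef
        have hS : (m - 1) + ((m' - 1) + ((rest'.map fun x => x - 1).sum)) + 1 = n := by
          simpa using hsum
        have hcn : c + 2 ≤ n := by omega
        have hcut1 : cutPt (m :: m' :: rest') 1 = c := by
          simp [cutPt_cons, cutPt_zero, hcdef]
        have hflip0 : o (c - 1) ≠ o c := by
          have := hflip 0 (by simp)
          rwa [hcut1] at this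
        have hside : ∀ x y : Fin n, Relation.ReflTransGen (lineArrow n o) x y →
            ((fun z : Fin n => z.val ≤ c) x ∧ (fun z : Fin n => z.val ≤ c) y) ∨
            ((fun z : Fin n => c ≤ z.val) x ∧ (fun z : Fin n => c ≤ z.val) y) := by
          intro x y h
          rw [rtg_iff_seg] at h
          rcases h with ⟨h1, h2⟩ | ⟨h1, h2⟩
          · by_cases hy : y.val ≤ c
            · exact Or.inl ⟨by omega, hy⟩
            · refine Or.inr ⟨?_, by omega⟩
              by_contra hx
              exact hflip0 ((h2 (c - 1) (by omega) (by omega)).trans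
                (h2 c (by omega) (by omega)).symm)
          · by_cases hx : x.val ≤ c
            · exact Or.inl ⟨hx, by omega⟩
            · refine Or.inr ⟨by omega, ?_⟩
              by_contra hy
              exact hflip0 ((h2 (c - 1) (by omega) (by omega)).trans
                (h2 c (by omega) (by omega)).symm)
        have hmeet : ∀ x : Fin n, x.val ≤ c → c ≤ x.val → x = (⟨c, by omega⟩ : Fin n) :=
          fun x h1 h2 => Fin.ext (le_antisymm h1 h2)
        have hcov : ∀ x : Fin n, x.val ≤ c ∨ c ≤ x.val := fun x => le_total x.val c
        rw [card_glue (rtg_po) hcov hmeet hside]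
        -- left factor
        have hmonoL : ∀ a b : {x : Fin n // x.val ≤ c},
            leSub (Relation.ReflTransGen (lineArrow n o)) (fun z => z.val ≤ c) a b ↔
            Relation.ReflTransGen (lineArrow (c + 1) o)
              (eSplitL n c (by omega) a) (eSplitL n c (by omega) b) := by
          intro a b
          show Relation.ReflTransGen (lineArrow n o) a.1 b.1 ↔ _
          rw [rtg_iff_seg, rtg_iff_seg]
          exact Iff.rfl
        have hL : Nat.card (QHS (leSub (Relation.ReflTransGen (lineArrow n o))
            (fun z : Fin n => z.val ≤ c))) = catalan m := by
          rw [card_qhs_congr_mono (eSplitL n c (by omega)) hmonoL]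
          rw [card_const_seg (fun e he => hconst 0 e 0 (by simp [cutPt_zero])
            (by rw [hcut1]; omega) (by simp [cutPt_zero]) (by rw [hcut1]; omega))]
          congr 1
          omega
        -- right factor
        have hmonoR : ∀ a b : {x : Fin n // c ≤ x.val},
            leSub (Relation.ReflTransGen (lineArrow n o)) (fun z => c ≤ z.val) a b ↔
            Relation.ReflTransGen (lineArrow (n - c) (fun e => o (e + c)))
              (eSplitR n c a) (eSplitR n c b) := by
          intro a b
          have ha : c ≤ a.1.val := a.2
          have hb : c ≤ b.1.val := b.2
          show Relation.ReflTransGen (lineArrow n o) a.1 b.1 ↔ _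
          rw [rtg_iff_seg, rtg_iff_seg]
          constructor
          · rintro (⟨h1, h2⟩ | ⟨h1, h2⟩)
            · refine Or.inl ⟨show a.1.val - c ≤ b.1.val - c by omega, fun e he1 he2 => ?_⟩
              have he1' : a.1.val - c ≤ e := he1
              have he2' : e < b.1.val - c := he2
              exact h2 (e + c) (by omega) (by omega)
            · refine Or.inr ⟨show b.1.val - c ≤ a.1.val - c by omega, fun e he1 he2 => ?_⟩
              have he1' : b.1.val - c ≤ e := he1
              have he2' : e < a.1.val - c := he2
              exact h2 (e + c) (by omega) (by omega)
          · rintro (⟨h1, h2⟩ | ⟨h1, h2⟩)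
            · have h1' : a.1.val - c ≤ b.1.val - c := h1
              refine Or.inl ⟨by omega, fun e he1 he2 => ?_⟩
              have := h2 (e - c) (show a.1.val - c ≤ e - c by omega)
                (show e - c < b.1.val - c by omega)
              rw [show e = e - c + c by omega]
              exact this
            · have h1' : b.1.val - c ≤ a.1.val - c := h1
              refine Or.inr ⟨by omega, fun e he1 he2 => ?_⟩
              have := h2 (e - c) (show b.1.val - c ≤ e - c by omega)
                (show e - c < a.1.val - c by omega)
              rw [show e = e - c + c by omega]
              exact this
        have hcutR : ∀ t, cutPt (m :: m' :: rest') (t + 1) = c + cutPt (m' :: rest') t := by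
          intro t
          rw [cutPt_cons]
        have hR : Nat.card (QHS (leSub (Relation.ReflTransGen (lineArrow n o))
            (fun z : Fin n => c ≤ z.val))) = ((m' :: rest').map catalan).prod := by
          rw [card_qhs_congr_mono (eSplitR n c) hmonoR]
          refine ih (m' :: rest') (n - c) (fun e => o (e + c)) (by simp at hlen ⊢; omega)
            (by simp)
            (by intro x hx; exact hpos x (by simp at hx ⊢; tauto))
            (by simp at hsum ⊢; omega)
            ?_ ?_
          · intro t e1 e2 h1 h2 h3 h4
            exact hconst (t + 1) (e1 + c) (e2 + c)
              (by rw [hcutR]; omega) (by rw [hcutR]; omega)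
              (by rw [hcutR]; omega) (by rw [hcutR]; omega)
          · intro t ht
            have hq : 1 ≤ cutPt (m' :: rest') (t + 1) := by rw [cutPt_cons]; omega
            have := hflip (t + 1) (by simp at ht ⊢; omega)
            rw [hcutR (t + 1)] at this
            show o (cutPt (m' :: rest') (t + 1) - 1 + c) ≠ o (cutPt (m' :: rest') (t + 1) + c)
            rw [show cutPt (m' :: rest') (t + 1) - 1 + c = c + cutPt (m' :: rest') (t + 1) - 1
                by omega,
              show cutPt (m' :: rest') (t + 1) + c = c + cutPt (m' :: rest') (t + 1) by omega]
            exact this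
        rw [hL, hR]
        simp

/-- the number of quasi-hereditary structures on the path algebra of a type `A`
quiver is the product of the Catalan numbers of the sizes of its maximal equioriented
segments. -/
theorem card_qhStr_typeA (n : ℕ) (hn : 1 ≤ n) (o : ℕ → Bool) (ns : List ℕ)
    (hne : ns ≠ []) (hpos : ∀ m ∈ ns, 1 ≤ m)
    (hsum : (ns.map fun m => m - 1).sum + 1 = n)
    (hconst : ∀ t e₁ e₂ : ℕ,
      cutPt ns t ≤ e₁ → e₁ < cutPt ns (t + 1) →
      cutPt ns t ≤ e₂ → e₂ < cutPt ns (t + 1) → o e₁ = o e₂)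
    (hflip : ∀ t, t + 1 < ns.length → o (cutPt ns (t + 1) - 1) ≠ o (cutPt ns (t + 1))) :
    Nat.card (Quot (fun (l₁ l₂ : {l : Fin n → Fin n → Prop //
        IsPartialOrder (Fin n) l ∧ AdaptedG (Relation.ReflTransGen (lineArrow n o)) l}) =>
      QHEquivG (Relation.ReflTransGen (lineArrow n o)) l₁.1 l₂.1)) =
      (ns.map catalan).prod := by
  exact main_count ns.length ns n o le_rfl hne hpos hsum hconst hflip
end

section
/- For the quiver D₁ with vertices 1,…,n (n ≥ 3), arrows 1 → 2 → ⋯ → n−2 and n−2 → n−1, n−2 → n, the number of quasi-hereditary structures on kD₁ equals 2·Cₙ − 3·C_{n−1}, where Cₘ denotes the m-th Catalan number. -/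
/-- The path order of the quiver `D₁` on `Fin n` (0-based): a chain `0, 1, …, n-3` followed
by two incomparable top elements `n-2` and `n-1`, both above every chain vertex. -/
def D1le (n : ℕ) (a b : Fin n) : Prop :=
  a = b ∨ (a.val ≤ b.val ∧ b.val + 3 ≤ n) ∨
    (a.val + 3 ≤ n ∧ (b.val = n - 2 ∨ b.val = n - 1))


open Set

/-- Interval-max relation of a word `w` on a chain of length `k`:
`MM k w x y` iff `w y` is the max of `w` on the integer interval between `x` and `y`. -/
def MM (k : ℕ) (w : ℕ → ℕ) (x y : Fin k) : Prop :=
  ∀ j : ℕ, min x.val y.val ≤ j → j ≤ max x.val y.val → w j ≤ w y.val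

/-- Invariant values of chains of length `k`. -/
def SS (k : ℕ) : Set (Fin k → Fin k → Prop) :=
  {R | ∃ w : ℕ → ℕ, Set.InjOn w (Set.Iio k) ∧ R = MM k w}

lemma MM_relord {k : ℕ} {w w' : ℕ → ℕ}
    (H : ∀ a b, a < k → b < k → (w a ≤ w b ↔ w' a ≤ w' b)) :
    MM k w = MM k w' := by
  funext x y
  apply propext
  constructor
  · intro h j hj1 hj2
    have hjk : j < k := by have := x.2; have := y.2; omega
    exact (H j y.val hjk y.2).mp (h j hj1 hj2)
  · intro h j hj1 hj2
    have hjk : j < k := by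
      have := x.2; have := y.2; omega
    exact (H j y.val hjk y.2).mpr (h j hj1 hj2)

lemma MM_congOn {k : ℕ} {w w' : ℕ → ℕ} (H : ∀ j, j < k → w j = w' j) :
    MM k w = MM k w' :=
  MM_relord (fun a b ha hb => by rw [H a ha, H b hb])

lemma MM_restrict {k c s : ℕ} (h : c + s ≤ k) (w : ℕ → ℕ) (x y : Fin s) :
    MM k w ⟨c + x.val, by omega⟩ ⟨c + y.val, by omega⟩ ↔ MM s (fun j => w (c + j)) x y := by
  have hx := x.2; have hy := y.2
  constructor
  · intro H j hj1 hj2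
    have := H (c + j) (by simp only [] at *; omega) (by simp only [] at *; omega)
    simpa using this
  · intro H j hj1 hj2
    simp only [] at hj1 hj2
    have hjc : c ≤ j := by omega
    have := H (j - c) (by omega) (by omega)
    simp only [] at this ⊢
    rwa [Nat.add_sub_cancel' hjc] at this

lemma MM_span {k r : ℕ} {w : ℕ → ℕ} (hr : r < k)
    (hmax : ∀ j, j < k → j ≠ r → w j < w r) (x y : Fin k)
    (h1 : min x.val y.val ≤ r) (h2 : r ≤ max x.val y.val) :
    MM k w x y ↔ y.val = r := by
  constructor
  · intro H
    by_contra hne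
    exact absurd (H r h1 h2) (not_le.mpr (hmax y.val y.2 hne))
  · intro hy
    intro j hj1 hj2
    rcases eq_or_ne j r with rfl | hne
    · rw [hy]
    · have hjk : j < k := by have := x.2; have := y.2; omega
      exact le_of_lt (hy ▸ hmax j hjk hne)

lemma exists_strict_max {k : ℕ} (hk : 0 < k) {w : ℕ → ℕ} (hw : Set.InjOn w (Set.Iio k)) :
    ∃ r, r < k ∧ ∀ j, j < k → j ≠ r → w j < w r := by
  obtain ⟨r, hr, hmax⟩ := Finset.exists_max_image (Finset.range k) w ⟨0, Finset.mem_range.mpr hk⟩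
  refine ⟨r, Finset.mem_range.mp hr, fun j hj hne => ?_⟩
  have hle := hmax j (Finset.mem_range.mpr hj)
  rcases lt_or_eq_of_le hle with h | h
  · exact h
  · exact absurd (hw (by simpa using hj) (by simpa using Finset.mem_range.mp hr) h) hne

/-- Join two words with a strict peak at position `r`. -/
def joinw (r s : ℕ) (u v : ℕ → ℕ) : ℕ → ℕ := fun j =>
  if j < r then 2 * u j
  else if j = r then 2 * ((Finset.range r).sup u ⊔ (Finset.range s).sup v) + 2
  else 2 * v (j - (r + 1)) + 1

lemma joinw_left {r s : ℕ} {u v : ℕ → ℕ} {j : ℕ} (h : j < r) :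
    joinw r s u v j = 2 * u j := by simp [joinw, h]

lemma joinw_right {r s : ℕ} {u v : ℕ → ℕ} (j : ℕ) :
    joinw r s u v (r + 1 + j) = 2 * v j + 1 := by
  have h1 : ¬ (r + 1 + j < r) := by omega
  have h2 : ¬ (r + 1 + j = r) := by omega
  simp [joinw, h1, h2]

lemma joinw_peak {r s : ℕ} {u v : ℕ → ℕ} :
    joinw r s u v r = 2 * ((Finset.range r).sup u ⊔ (Finset.range s).sup v) + 2 := by
  simp [joinw]

lemma joinw_max {r s : ℕ} {u v : ℕ → ℕ} :
    ∀ j, j < r + 1 + s → j ≠ r → joinw r s u v j < joinw r s u v r := by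
  intro j hj hne
  rw [joinw_peak]
  rcases lt_or_ge j r with h | h
  · rw [joinw_left h]
    have : u j ≤ (Finset.range r).sup u := Finset.le_sup (Finset.mem_range.mpr h)
    omega
  · have hj' : j - (r+1) < s := by omega
    have h1 : ¬ (j < r) := by omega
    have h2 : ¬ (j = r) := hne
    simp only [joinw, h1, h2, if_false]
    have : v (j - (r+1)) ≤ (Finset.range s).sup v := Finset.le_sup (Finset.mem_range.mpr hj')
    omega

lemma joinw_injOn {r s : ℕ} {u v : ℕ → ℕ} (hu : Set.InjOn u (Set.Iio r))
    (hv : Set.InjOn v (Set.Iio s)) : Set.InjOn (joinw r s u v) (Set.Iio (r + 1 + s)) := by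
  intro a ha b hb hab
  simp only [mem_Iio] at ha hb
  rcases lt_trichotomy a r with h1 | h1 | h1 <;> rcases lt_trichotomy b r with h2 | h2 | h2
  · rw [joinw_left h1, joinw_left h2] at hab
    exact hu h1 h2 (by omega)
  · subst h2; exact absurd hab (ne_of_lt (joinw_max a (by omega) (by omega)))
  · rw [joinw_left h1] at hab
    have h2' : ¬ (b < r) := by omega
    have h2'' : ¬ (b = r) := by omega
    simp only [joinw, h2', h2'', if_false] at hab
    omega
  · subst h1; exact absurd hab.symm (ne_of_lt (joinw_max b (by omega) (by omega)))
  · omega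
  · subst h1; exact absurd hab.symm (ne_of_lt (joinw_max b (by omega) (by omega)))
  · have h1' : ¬ (a < r) := by omega
    have h1'' : ¬ (a = r) := by omega
    rw [joinw_left h2] at hab
    simp only [joinw, h1', h1'', if_false] at hab
    omega
  · subst h2; exact absurd hab (ne_of_lt (joinw_max a (by omega) (by omega)))
  · have h1' : ¬ (a < r) := by omega
    have h1'' : ¬ (a = r) := by omega
    have h2' : ¬ (b < r) := by omega
    have h2'' : ¬ (b = r) := by omega
    simp only [joinw, h1', h1'', h2', h2'', if_false] at hab
    have := hv (show a - (r+1) ∈ Set.Iio s by simp; omega) (show b - (r+1) ∈ Set.Iio s by simp; omega) (by omega)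
    omega

lemma MM_val {k k' : ℕ} (w : ℕ → ℕ) (x y : Fin k) (x' y' : Fin k')
    (hx : x.val = x'.val) (hy : y.val = y'.val) : MM k w x y ↔ MM k' w x' y' := by
  unfold MM; rw [hx, hy]

lemma MM_split_cong {k r s : ℕ} (hk : k = r + 1 + s) {w w' : ℕ → ℕ}
    (hmax : ∀ j, j < k → j ≠ r → w j < w r)
    (hmax' : ∀ j, j < k → j ≠ r → w' j < w' r)
    (hL : MM r w = MM r w')
    (hR : MM s (fun j => w (r + 1 + j)) = MM s (fun j => w' (r + 1 + j))) :
    MM k w = MM k w' := by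
  funext x y
  apply propext
  have hx := x.2; have hy := y.2
  by_cases hspan : min x.val y.val ≤ r ∧ r ≤ max x.val y.val
  · rw [MM_span (by omega) hmax x y hspan.1 hspan.2,
      MM_span (by omega) hmax' x y hspan.1 hspan.2]
  · rcases (by omega : max x.val y.val < r ∨ r < min x.val y.val) with hb | ha
    · have hxr : x.val < r := by omega
      have hyr : y.val < r := by omega
      rw [MM_val w x y ⟨x.val, hxr⟩ ⟨y.val, hyr⟩ rfl rfl,
        MM_val w' x y ⟨x.val, hxr⟩ ⟨y.val, hyr⟩ rfl rfl, hL]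
    · have hxs : x.val - (r+1) < s := by omega
      have hys : y.val - (r+1) < s := by omega
      have e1 : MM k w x y ↔ MM s (fun j => w (r + 1 + j)) ⟨x.val - (r+1), hxs⟩ ⟨y.val - (r+1), hys⟩ :=
        (MM_val w x y (⟨r + 1 + (x.val - (r+1)), by omega⟩ : Fin k)
          (⟨r + 1 + (y.val - (r+1)), by omega⟩ : Fin k)
          (by show x.val = r + 1 + (x.val - (r+1)); omega)
          (by show y.val = r + 1 + (y.val - (r+1)); omega)).trans
          (MM_restrict (k := k) (c := r+1) (s := s) (by omega) w ⟨x.val - (r+1), hxs⟩ ⟨y.val - (r+1), hys⟩)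
      have e2 : MM k w' x y ↔ MM s (fun j => w' (r + 1 + j)) ⟨x.val - (r+1), hxs⟩ ⟨y.val - (r+1), hys⟩ :=
        (MM_val w' x y (⟨r + 1 + (x.val - (r+1)), by omega⟩ : Fin k)
          (⟨r + 1 + (y.val - (r+1)), by omega⟩ : Fin k)
          (by show x.val = r + 1 + (x.val - (r+1)); omega)
          (by show y.val = r + 1 + (y.val - (r+1)); omega)).trans
          (MM_restrict (k := k) (c := r+1) (s := s) (by omega) w' ⟨x.val - (r+1), hxs⟩ ⟨y.val - (r+1), hys⟩)
      rw [e1, e2, hR]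

lemma MM_double {k : ℕ} (w : ℕ → ℕ) (c : ℕ) : MM k (fun j => 2 * w j + c) = MM k w :=
  MM_relord (fun a b _ _ => by omega)

lemma mycard_sigma {ι : Type*} [Fintype ι] (β : ι → Type*) [∀ i, Finite (β i)] :
    Nat.card ((i : ι) × β i) = ∑ i, Nat.card (β i) := by
  letI : ∀ i, Fintype (β i) := fun i => Fintype.ofFinite _
  classical
  rw [Nat.card_eq_fintype_card, Fintype.card_sigma]
  exact Finset.sum_congr rfl fun i _ => (Nat.card_eq_fintype_card).symm

lemma MM_join_eq {m : ℕ} (r : ℕ) (hr : r ≤ m) {u v w : ℕ → ℕ}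
    (hw : ∀ j, j < m + 1 → j ≠ r → w j < w r)
    (hL : MM r u = MM r w) (hR : MM (m - r) v = MM (m - r) (fun j => w (r + 1 + j))) :
    MM (m + 1) (joinw r (m - r) u v) = MM (m + 1) w := by
  apply MM_split_cong (r := r) (s := m - r) (by omega)
  · intro j hj hne; exact joinw_max j (by omega) hne
  · exact hw
  · have h1 : MM r (joinw r (m - r) u v) = MM r u :=
      MM_relord (fun a b ha hb => by rw [joinw_left ha, joinw_left hb]; omega)
    rw [h1, hL]
  · have h1 : MM (m - r) (fun j => joinw r (m - r) u v (r + 1 + j)) = MM (m - r) v :=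
      MM_relord (fun a b ha hb => by
        simp only [joinw_right]; omega)
    rw [h1, hR]

lemma max_unique {k r r' : ℕ} (hr : r < k) (hr' : r' < k) {w w' : ℕ → ℕ}
    (hmax : ∀ j, j < k → j ≠ r → w j < w r) (hmax' : ∀ j, j < k → j ≠ r' → w' j < w' r')
    (heq : MM k w = MM k w') : r = r' := by
  have h1 : MM k w ⟨r', hr'⟩ ⟨r, hr⟩ :=
    (MM_span hr hmax ⟨r', hr'⟩ ⟨r, hr⟩ (by show min r' r ≤ r; omega) (by show r ≤ max r' r; omega)).mpr rfl
  have h2 : MM k w' ⟨r', hr'⟩ ⟨r, hr⟩ := heq ▸ h1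
  exact (MM_span hr' hmax' ⟨r', hr'⟩ ⟨r, hr⟩ (by show min r' r ≤ r'; omega) (by show r' ≤ max r' r; omega)).mp h2

/-- The decomposition map for chains. -/
noncomputable def Bmap (m : ℕ) :
    ((i : Fin (m + 1)) × (↥(SS (i : ℕ)) × ↥(SS (m - (i : ℕ))))) → ↥(SS (m + 1)) :=
  fun t =>
    ⟨MM (m + 1) (joinw (t.1 : ℕ) (m - (t.1 : ℕ)) t.2.1.2.choose t.2.2.2.choose),
     ⟨joinw (t.1 : ℕ) (m - (t.1 : ℕ)) t.2.1.2.choose t.2.2.2.choose,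
      (by
        have h : ((t.1 : ℕ) + 1 + (m - (t.1 : ℕ))) = m + 1 := by omega
        have h2 := joinw_injOn t.2.1.2.choose_spec.1 t.2.2.2.choose_spec.1
        rw [h] at h2
        exact h2), rfl⟩⟩

lemma Bmap_bij (m : ℕ) : Function.Bijective (Bmap m) := by
  constructor
  · rintro ⟨i, L, R⟩ ⟨i', L', R'⟩ h
    have heq := congrArg Subtype.val h
    simp only [Bmap] at heq
    set u := L.2.choose with hu
    set v := R.2.choose with hv
    set u' := L'.2.choose with hu'
    set v' := R'.2.choose with hv'
    have hii : (i : ℕ) = (i' : ℕ) := by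
      refine max_unique (k := m+1) (by omega) (by omega) ?_ ?_ heq
      · intro j hj hne; exact joinw_max j (by omega) hne
      · intro j hj hne; exact joinw_max j (by omega) hne
    have hif : i = i' := Fin.ext hii
    subst hif
    have hLv : MM (i : ℕ) u = MM (i : ℕ) u' := by
      have e1 : MM (i : ℕ) (joinw (i : ℕ) (m - i) u v) = MM (i : ℕ) u :=
        MM_relord (fun a b ha hb => by rw [joinw_left ha, joinw_left hb]; omega)
      have e1' : MM (i : ℕ) (joinw (i : ℕ) (m - i) u' v') = MM (i : ℕ) u' :=
        MM_relord (fun a b ha hb => by rw [joinw_left ha, joinw_left hb]; omega)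
      rw [← e1, ← e1']
      funext x y
      have := congrFun (congrFun heq ⟨x.val, by omega⟩) ⟨y.val, by omega⟩
      exact propext ((MM_val _ x y ⟨x.val, by omega⟩ ⟨y.val, by omega⟩ rfl rfl).trans
        ((iff_of_eq this).trans (MM_val _ ⟨x.val, by omega⟩ ⟨y.val, by omega⟩ x y rfl rfl)))
    have hRv : MM (m - (i:ℕ)) v = MM (m - (i:ℕ)) v' := by
      have e1 : MM (m - (i:ℕ)) (fun j => joinw (i : ℕ) (m - i) u v ((i:ℕ) + 1 + j)) = MM (m - (i:ℕ)) v :=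
        MM_relord (fun a b ha hb => by simp only [joinw_right]; omega)
      have e1' : MM (m - (i:ℕ)) (fun j => joinw (i : ℕ) (m - i) u' v' ((i:ℕ) + 1 + j)) = MM (m - (i:ℕ)) v' :=
        MM_relord (fun a b ha hb => by simp only [joinw_right]; omega)
      rw [← e1, ← e1']
      funext x y
      have hx2 := x.2; have hy2 := y.2
      have := congrFun (congrFun heq ⟨(i:ℕ) + 1 + x.val, by omega⟩) ⟨(i:ℕ) + 1 + y.val, by omega⟩
      exact propext (((MM_restrict (k := m+1) (c := (i:ℕ)+1) (s := m - (i:ℕ)) (by omega) _ x y).symm).trans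
        ((iff_of_eq this).trans (MM_restrict (k := m+1) (c := (i:ℕ)+1) (s := m - (i:ℕ)) (by omega) _ x y)))
    have hL2 : L.1 = L'.1 := by
      rw [L.2.choose_spec.2, L'.2.choose_spec.2, ← hu, ← hu', hLv]
    have hR2 : R.1 = R'.1 := by
      rw [R.2.choose_spec.2, R'.2.choose_spec.2, ← hv, ← hv', hRv]
    exact congrArg (Sigma.mk i)
      (by rw [show L = L' from Subtype.ext hL2, show R = R' from Subtype.ext hR2])
  · rintro ⟨R, hR⟩
    obtain ⟨w, hw, rfl⟩ := hR
    obtain ⟨r, hrk, hmax⟩ := exists_strict_max (k := m + 1) (by omega) hw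
    have hLmem : MM r w ∈ SS r := ⟨w, hw.mono (fun a ha => by simp at ha ⊢; omega), rfl⟩
    have hRmem : MM (m - r) (fun j => w (r + 1 + j)) ∈ SS (m - r) :=
      ⟨fun j => w (r + 1 + j), fun a ha b hb hab => by
        simp only [mem_Iio] at ha hb
        have := hw (show r+1+a ∈ Set.Iio (m+1) by simp; omega)
          (show r+1+b ∈ Set.Iio (m+1) by simp; omega) hab
        omega, rfl⟩
    refine ⟨⟨⟨r, by omega⟩, ⟨⟨MM r w, hLmem⟩, ⟨MM (m - r) (fun j => w (r + 1 + j)), hRmem⟩⟩⟩, ?_⟩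
    apply Subtype.ext
    simp only [Bmap]
    exact MM_join_eq r (by omega) hmax hLmem.choose_spec.2.symm hRmem.choose_spec.2.symm

theorem card_SS : ∀ k, Nat.card ↥(SS k) = catalan k := by
  intro k
  induction k using Nat.strong_induction_on with
  | _ k IH =>
    match k with
    | 0 =>
      rw [catalan_zero]
      rw [Nat.card_eq_one_iff_unique]
      constructor
      · constructor
        intro a b
        apply Subtype.ext
        funext x
        exact x.elim0
      · exact ⟨⟨MM 0 id, ⟨id, fun a _ b _ h => h, rfl⟩⟩⟩
    | (m + 1) =>
      rw [← Nat.card_eq_of_bijective (Bmap m) (Bmap_bij m), mycard_sigma, catalan_succ]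
      apply Finset.sum_congr rfl
      intro i _
      rw [Nat.card_prod, IH i (by omega), IH (m - (i : ℕ)) (by omega)]

/-- Swap in the second top: the `b`-chain word. -/
def swb (m : ℕ) (w : ℕ → ℕ) : ℕ → ℕ := fun j => if j = m then w (m + 1) else w j

/-- The invariant of the D-type poset with chain length `m` (total `m+2` vertices):
the pair of interval-max relations of the two chains (chain + top `a`, chain + top `b`). -/
def Phi (m : ℕ) (w : ℕ → ℕ) :
    (Fin (m+1) → Fin (m+1) → Prop) × (Fin (m+1) → Fin (m+1) → Prop) :=
  (MM (m+1) w, MM (m+1) (swb m w))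

def SD (m : ℕ) : Set ((Fin (m+1) → Fin (m+1) → Prop) × (Fin (m+1) → Fin (m+1) → Prop)) :=
  {P | ∃ w : ℕ → ℕ, Set.InjOn w (Set.Iio (m+2)) ∧ P = Phi m w}

lemma swb_lt {m : ℕ} {w : ℕ} : True := trivial

lemma cong1 {m r : ℕ} (hr : r < m) {w w' : ℕ → ℕ}
    (hmax : ∀ j, j < m+2 → j ≠ r → w j < w r)
    (hmax' : ∀ j, j < m+2 → j ≠ r → w' j < w' r)
    (hL : MM r w = MM r w')
    (hD1 : MM (m - r) (fun j => w (r+1+j)) = MM (m - r) (fun j => w' (r+1+j)))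
    (hD2 : MM (m - r) (swb (m-1-r) (fun j => w (r+1+j)))
         = MM (m - r) (swb (m-1-r) (fun j => w' (r+1+j)))) :
    Phi m w = Phi m w' := by
  unfold Phi
  have swbmax : ∀ (u : ℕ → ℕ), (∀ j, j < m+2 → j ≠ r → u j < u r) →
      ∀ j, j < m+1 → j ≠ r → swb m u j < swb m u r := by
    intro u hu j hj hne
    unfold swb
    rw [if_neg (show ¬ (r = m) by omega)]
    by_cases hjm : j = m
    · rw [if_pos hjm]; exact hu (m+1) (by omega) (by omega)
    · rw [if_neg hjm]; exact hu j (by omega) hne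
  have swbshift : ∀ (u : ℕ → ℕ), ∀ j, j < m - r →
      swb m u (r+1+j) = swb (m-1-r) (fun j => u (r+1+j)) j := by
    intro u j hj
    unfold swb
    by_cases hjm : j = m - 1 - r
    · rw [if_pos (by omega), if_pos hjm]
      exact congrArg u (by omega)
    · rw [if_neg (by omega), if_neg hjm]
  refine Prod.ext ?_ ?_
  · exact MM_split_cong (k := m+1) (r := r) (s := m - r) (by omega)
      (fun j hj hne => hmax j (by omega) hne) (fun j hj hne => hmax' j (by omega) hne) hL hD1
  · apply MM_split_cong (k := m+1) (r := r) (s := m - r) (by omega)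
      (swbmax w hmax) (swbmax w' hmax')
    · have e : MM r (swb m w) = MM r w :=
        MM_congOn (fun j hj => by unfold swb; rw [if_neg (by omega)])
      have e' : MM r (swb m w') = MM r w' :=
        MM_congOn (fun j hj => by unfold swb; rw [if_neg (by omega)])
      rw [e, e', hL]
    · have e : MM (m - r) (fun j => swb m w (r+1+j))
          = MM (m - r) (swb (m-1-r) (fun j => w (r+1+j))) := MM_congOn (swbshift w)
      have e' : MM (m - r) (fun j => swb m w' (r+1+j))
          = MM (m - r) (swb (m-1-r) (fun j => w' (r+1+j))) := MM_congOn (swbshift w')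
      rw [e, e', hD2]

lemma MM_empty (w w' : ℕ → ℕ) : MM 0 w = MM 0 w' := by
  funext x; exact x.elim0

lemma cong4 {m : ℕ} {w w' : ℕ → ℕ}
    (hA : ∀ j, j < m → w j < w m) (hB : ∀ j, j < m → w j < w (m+1))
    (hA' : ∀ j, j < m → w' j < w' m) (hB' : ∀ j, j < m → w' j < w' (m+1))
    (hC : MM m w = MM m w') : Phi m w = Phi m w' := by
  unfold Phi
  refine Prod.ext ?_ ?_
  · exact MM_split_cong (k := m+1) (r := m) (s := 0) (by omega)
      (fun j hj hne => hA j (by omega)) (fun j hj hne => hA' j (by omega)) hC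
      (MM_empty _ _)
  · apply MM_split_cong (k := m+1) (r := m) (s := 0) (by omega)
    · intro j hj hne
      unfold swb; rw [if_neg hne, if_pos rfl]; exact hB j (by omega)
    · intro j hj hne
      unfold swb; rw [if_neg hne, if_pos rfl]; exact hB' j (by omega)
    · have e : MM m (swb m w) = MM m w :=
        MM_congOn (fun j hj => by unfold swb; rw [if_neg (by omega)])
      have e' : MM m (swb m w') = MM m w' :=
        MM_congOn (fun j hj => by unfold swb; rw [if_neg (by omega)])
      rw [e, e', hC]
    · exact MM_empty _ _

lemma cong2 {m r : ℕ} (hr : r < m) {w w' : ℕ → ℕ}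
    (hA : ∀ j, j < m → w j < w m) (hA' : ∀ j, j < m → w' j < w' m)
    (hB : ∀ j, j < m+1 → j ≠ r → swb m w j < swb m w r)
    (hB' : ∀ j, j < m+1 → j ≠ r → swb m w' j < swb m w' r)
    (hL : MM r w = MM r w')
    (hR : MM (m - r) (fun j => swb m w (r+1+j)) = MM (m - r) (fun j => swb m w' (r+1+j))) :
    Phi m w = Phi m w' := by
  unfold Phi
  have eL : MM r (swb m w) = MM r w :=
    MM_congOn (fun j hj => by unfold swb; rw [if_neg (by omega)])
  have eL' : MM r (swb m w') = MM r w' :=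
    MM_congOn (fun j hj => by unfold swb; rw [if_neg (by omega)])
  have comp2 : MM (m+1) (swb m w) = MM (m+1) (swb m w') := by
    apply MM_split_cong (k := m+1) (r := r) (s := m - r) (by omega) hB hB'
    · rw [eL, eL', hL]
    · exact hR
  refine Prod.ext ?_ comp2
  -- first component: peak at m, left part = chain = restriction of comp2
  have echain : MM m w = MM m w' := by
    funext x y
    have hx := x.2; have hy := y.2
    have ee : MM m (swb m w) = MM m w :=
      MM_congOn (fun j hj => by unfold swb; rw [if_neg (show ¬ (j = m) by omega)])
    have ee' : MM m (swb m w') = MM m w' :=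
      MM_congOn (fun j hj => by unfold swb; rw [if_neg (show ¬ (j = m) by omega)])
    have e1 : MM m w x y ↔ MM (m+1) (swb m w) ⟨x.val, by omega⟩ ⟨y.val, by omega⟩ := by
      rw [← ee]; exact MM_val _ x y _ _ rfl rfl
    have e1' : MM m w' x y ↔ MM (m+1) (swb m w') ⟨x.val, by omega⟩ ⟨y.val, by omega⟩ := by
      rw [← ee']; exact MM_val _ x y _ _ rfl rfl
    rw [e1, e1', comp2]
  exact MM_split_cong (k := m+1) (r := m) (s := 0) (by omega)
    (fun j hj hne => hA j (by omega)) (fun j hj hne => hA' j (by omega)) echain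
    (MM_empty _ _)

lemma cong3 {m r : ℕ} (hr : r < m) {w w' : ℕ → ℕ}
    (hA : ∀ j, j < m+1 → j ≠ r → w j < w r)
    (hA' : ∀ j, j < m+1 → j ≠ r → w' j < w' r)
    (hB : ∀ j, j < m → w j < w (m+1)) (hB' : ∀ j, j < m → w' j < w' (m+1))
    (hL : MM r w = MM r w')
    (hR : MM (m - r) (fun j => w (r+1+j)) = MM (m - r) (fun j => w' (r+1+j))) :
    Phi m w = Phi m w' := by
  unfold Phi
  have comp1 : MM (m+1) w = MM (m+1) w' :=
    MM_split_cong (k := m+1) (r := r) (s := m - r) (by omega) hA hA' hL hR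
  refine Prod.ext comp1 ?_
  have echain : MM m w = MM m w' := by
    funext x y
    have hx := x.2; have hy := y.2
    have e1 : MM m w x y ↔ MM (m+1) w ⟨x.val, by omega⟩ ⟨y.val, by omega⟩ :=
      MM_val _ x y _ _ rfl rfl
    have e1' : MM m w' x y ↔ MM (m+1) w' ⟨x.val, by omega⟩ ⟨y.val, by omega⟩ :=
      MM_val _ x y _ _ rfl rfl
    rw [e1, e1', comp1]
  have eL : MM m (swb m w) = MM m w :=
    MM_congOn (fun j hj => by unfold swb; rw [if_neg (by omega)])
  have eL' : MM m (swb m w') = MM m w' :=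
    MM_congOn (fun j hj => by unfold swb; rw [if_neg (by omega)])
  apply MM_split_cong (k := m+1) (r := m) (s := 0) (by omega)
  · intro j hj hne
    unfold swb; rw [if_neg hne, if_pos rfl]; exact hB j (by omega)
  · intro j hj hne
    unfold swb; rw [if_neg hne, if_pos rfl]; exact hB' j (by omega)
  · rw [eL, eL', echain]
  · exact MM_empty _ _

lemma MM_transport {k k' : ℕ} (h : k = k') {u v : ℕ → ℕ} (e : MM k u = MM k v) :
    MM k' u = MM k' v := by subst h; exact e

lemma swb_scale (p : ℕ) (v : ℕ → ℕ) :
    swb p (fun j => 2 * v j + 1) = fun j => 2 * swb p v j + 1 := by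
  funext j
  unfold swb
  by_cases h : j = p
  · rw [if_pos h, if_pos h]
  · rw [if_neg h, if_neg h]

/-- `a` dominates the chain detector. -/
lemma detA_iff {m : ℕ} {w : ℕ → ℕ} (hw : ∀ j, j < m → w j ≠ w m) :
    MM (m+1) w ⟨0, by omega⟩ ⟨m, by omega⟩ ↔ ∀ j, j < m → w j < w m := by
  constructor
  · intro h j hj
    have hle : w j ≤ w m := h j (by show min 0 m ≤ j; omega) (by show j ≤ max 0 m; omega)
    exact lt_of_le_of_ne hle (hw j hj)
  · intro h j hj1 hj2
    have hjm : j ≤ m := by simpa using hj2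
    rcases eq_or_lt_of_le hjm with rfl | hlt
    · exact le_refl _
    · exact (h j hlt).le

/-- case 2 construction: `a` on top, `b`-chain shaped like `joinw r _ u v`. -/
def c2w (m r : ℕ) (u v : ℕ → ℕ) : ℕ → ℕ := fun j =>
  if j = m then joinw r (m - r) u v r + 1
  else if j = m + 1 then joinw r (m - r) u v m
  else joinw r (m - r) u v j

/-- case 3 construction: `b` on top, `a`-chain shaped like `joinw r _ u v`. -/
def c3w (m r : ℕ) (u v : ℕ → ℕ) : ℕ → ℕ := fun j =>
  if j = m + 1 then joinw r (m - r) u v r + 1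
  else joinw r (m - r) u v j

/-- case 4 construction: both tops dominate the chain. -/
def c4w (m : ℕ) (u : ℕ → ℕ) : ℕ → ℕ := fun j =>
  if j = m then 2 * ((Finset.range m).sup u) + 2
  else if j = m + 1 then 2 * ((Finset.range m).sup u) + 4
  else 2 * u j

lemma c2w_chain {m r : ℕ} {u v : ℕ → ℕ} {j : ℕ} (h : j < m) :
    c2w m r u v j = joinw r (m - r) u v j := by
  unfold c2w; rw [if_neg (by omega), if_neg (by omega)]

lemma c2w_swb {m r : ℕ} {u v : ℕ → ℕ} {j : ℕ} (h : j < m + 1) :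
    swb m (c2w m r u v) j = joinw r (m - r) u v j := by
  unfold swb
  by_cases hj : j = m
  · rw [if_pos hj]
    unfold c2w
    rw [if_neg (by omega), if_pos rfl, hj]
  · rw [if_neg hj]
    exact c2w_chain (by omega)

lemma c2w_hA {m r : ℕ} (hr : r < m) {u v : ℕ → ℕ} :
    ∀ j, j < m → c2w m r u v j < c2w m r u v m := by
  intro j hj
  rw [c2w_chain hj]
  unfold c2w
  rw [if_pos rfl]
  rcases eq_or_ne j r with rfl | hne
  · omega
  · have := joinw_max (s := m - r) (u := u) (v := v) j (by omega) hne
    omega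

lemma c2w_hB {m r : ℕ} (hr : r < m) {u v : ℕ → ℕ} :
    ∀ j, j < m + 1 → j ≠ r → swb m (c2w m r u v) j < swb m (c2w m r u v) r := by
  intro j hj hne
  rw [c2w_swb hj, c2w_swb (by omega)]
  exact joinw_max j (by omega) hne

lemma c2w_injOn {m r : ℕ} (hr : r < m) {u v : ℕ → ℕ} (hu : Set.InjOn u (Set.Iio r))
    (hv : Set.InjOn v (Set.Iio (m - r))) :
    Set.InjOn (c2w m r u v) (Set.Iio (m + 2)) := by
  have hJ := joinw_injOn hu hv
  have hJmax := fun j hj hne => joinw_max (r := r) (s := m - r) (u := u) (v := v) j hj hne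
  intro a ha b hb hab
  simp only [mem_Iio] at ha hb
  have key : ∀ c, c < m + 2 → c ≠ m → ∃ c', c' < m + 1 ∧
      c2w m r u v c = joinw r (m - r) u v c' ∧ (c = c' ∨ c = m + 1 ∧ c' = m) := by
    intro c hc hcm
    rcases eq_or_ne c (m+1) with rfl | hc1
    · exact ⟨m, by omega, by unfold c2w; rw [if_neg (by omega), if_pos rfl], Or.inr ⟨rfl, rfl⟩⟩
    · exact ⟨c, by omega, c2w_chain (by omega), Or.inl rfl⟩
  have hbig : ∀ c, c < m + 1 → joinw r (m - r) u v c ≤ joinw r (m - r) u v r := by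
    intro c hc
    rcases eq_or_ne c r with h | hne
    · rw [h]
    · exact (hJmax c (by omega) hne).le
  by_cases ham : a = m
  · by_cases hbm : b = m
    · omega
    · exfalso
      obtain ⟨b', hb', he, _⟩ := key b hb hbm
      rw [ham, he] at hab
      have h1 := hbig b' hb'
      unfold c2w at hab
      rw [if_pos rfl] at hab
      omega
  · by_cases hbm : b = m
    · exfalso
      obtain ⟨a', ha', he, _⟩ := key a ha ham
      rw [hbm, he] at hab
      have h1 := hbig a' ha'
      unfold c2w at hab
      rw [if_pos rfl] at hab
      omega
    · obtain ⟨a', ha', hea, hca⟩ := key a ha ham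
      obtain ⟨b', hb', heb, hcb⟩ := key b hb hbm
      rw [hea, heb] at hab
      have : a' = b' := hJ (by simp only [mem_Iio]; omega) (by simp only [mem_Iio]; omega) hab
      omega

lemma c3w_chain {m r : ℕ} {u v : ℕ → ℕ} {j : ℕ} (h : j < m + 1) :
    c3w m r u v j = joinw r (m - r) u v j := by
  unfold c3w; rw [if_neg (by omega)]

lemma c3w_hA {m r : ℕ} (hr : r < m) {u v : ℕ → ℕ} :
    ∀ j, j < m + 1 → j ≠ r → c3w m r u v j < c3w m r u v r := by
  intro j hj hne
  rw [c3w_chain hj, c3w_chain (by omega)]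
  exact joinw_max j (by omega) hne

lemma c3w_hB {m r : ℕ} (hr : r < m) {u v : ℕ → ℕ} :
    ∀ j, j < m → c3w m r u v j < c3w m r u v (m+1) := by
  intro j hj
  rw [c3w_chain (by omega)]
  unfold c3w
  rw [if_pos rfl]
  rcases eq_or_ne j r with rfl | hne
  · omega
  · have := joinw_max (s := m - r) (u := u) (v := v) j (by omega) hne
    omega

lemma c3w_injOn {m r : ℕ} (hr : r < m) {u v : ℕ → ℕ} (hu : Set.InjOn u (Set.Iio r))
    (hv : Set.InjOn v (Set.Iio (m - r))) :
    Set.InjOn (c3w m r u v) (Set.Iio (m + 2)) := by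
  have hJ := joinw_injOn hu hv
  have hJmax := fun j hj hne => joinw_max (r := r) (s := m - r) (u := u) (v := v) j hj hne
  intro a ha b hb hab
  simp only [mem_Iio] at ha hb
  have hbig : ∀ c, c < m + 1 → joinw r (m - r) u v c ≤ joinw r (m - r) u v r := by
    intro c hc
    rcases eq_or_ne c r with h | hne
    · rw [h]
    · exact (hJmax c (by omega) hne).le
  by_cases ham : a = m + 1
  · by_cases hbm : b = m + 1
    · omega
    · exfalso
      rw [ham, c3w_chain (show b < m + 1 by omega)] at hab
      unfold c3w at hab
      rw [if_pos rfl] at hab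
      have h1 := hbig b (by omega)
      omega
  · by_cases hbm : b = m + 1
    · exfalso
      rw [hbm, c3w_chain (show a < m + 1 by omega)] at hab
      unfold c3w at hab
      rw [if_pos rfl] at hab
      have h1 := hbig a (by omega)
      omega
    · rw [c3w_chain (show a < m + 1 by omega), c3w_chain (show b < m + 1 by omega)] at hab
      exact hJ (by simp only [mem_Iio]; omega) (by simp only [mem_Iio]; omega) hab

lemma c4w_chain {m : ℕ} {u : ℕ → ℕ} {j : ℕ} (h : j < m) :
    c4w m u j = 2 * u j := by
  unfold c4w; rw [if_neg (by omega), if_neg (by omega)]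

lemma c4w_hA {m : ℕ} {u : ℕ → ℕ} : ∀ j, j < m → c4w m u j < c4w m u m := by
  intro j hj
  rw [c4w_chain hj]
  unfold c4w
  rw [if_pos rfl]
  have : u j ≤ (Finset.range m).sup u := Finset.le_sup (Finset.mem_range.mpr hj)
  omega

lemma c4w_hB {m : ℕ} {u : ℕ → ℕ} : ∀ j, j < m → c4w m u j < c4w m u (m+1) := by
  intro j hj
  rw [c4w_chain hj]
  unfold c4w
  rw [if_neg (by omega), if_pos rfl]
  have : u j ≤ (Finset.range m).sup u := Finset.le_sup (Finset.mem_range.mpr hj)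
  omega

lemma c4w_injOn {m : ℕ} {u : ℕ → ℕ} (hu : Set.InjOn u (Set.Iio m)) :
    Set.InjOn (c4w m u) (Set.Iio (m + 2)) := by
  intro a ha b hb hab
  simp only [mem_Iio] at ha hb
  have hsup : ∀ j, j < m → u j ≤ (Finset.range m).sup u :=
    fun j hj => Finset.le_sup (Finset.mem_range.mpr hj)
  have hc : ∀ c, c < m → c4w m u c = 2 * u c := fun c hc => c4w_chain hc
  by_cases ham : a = m <;> by_cases ham1 : a = m + 1 <;>
    by_cases hbm : b = m <;> by_cases hbm1 : b = m + 1 <;> try omega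
  · -- a = m, b = m + 1
    rw [ham, hbm1] at hab
    unfold c4w at hab
    rw [if_pos rfl, if_neg (by omega), if_pos rfl] at hab
    omega
  · -- a = m, b chain
    rw [ham, hc b (by omega)] at hab
    unfold c4w at hab
    rw [if_pos rfl] at hab
    have := hsup b (by omega); omega
  · -- a = m+1, b = m
    rw [ham1, hbm] at hab
    unfold c4w at hab
    rw [if_neg (by omega), if_pos rfl, if_pos rfl] at hab
    omega
  · -- a = m+1, b chain
    rw [ham1, hc b (by omega)] at hab
    unfold c4w at hab
    rw [if_neg (by omega), if_pos rfl] at hab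
    have := hsup b (by omega); omega
  · -- a chain, b = m
    rw [hbm, hc a (by omega)] at hab
    unfold c4w at hab
    rw [if_pos rfl] at hab
    have := hsup a (by omega); omega
  · -- a chain, b = m+1
    rw [hbm1, hc a (by omega)] at hab
    unfold c4w at hab
    rw [if_neg (by omega), if_pos rfl] at hab
    have := hsup a (by omega); omega
  · -- both chain
    rw [hc a (by omega), hc b (by omega)] at hab
    exact hu (by simp only [mem_Iio]; omega) (by simp only [mem_Iio]; omega) (by omega)

def DA (m : ℕ) (P : (Fin (m+1) → Fin (m+1) → Prop) × (Fin (m+1) → Fin (m+1) → Prop)) : Prop :=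
  P.1 ⟨0, by omega⟩ ⟨m, by omega⟩

def DB (m : ℕ) (P : (Fin (m+1) → Fin (m+1) → Prop) × (Fin (m+1) → Fin (m+1) → Prop)) : Prop :=
  P.2 ⟨0, by omega⟩ ⟨m, by omega⟩

lemma MM_top_imp {m : ℕ} {w : ℕ → ℕ} (h : MM (m+1) w ⟨0, by omega⟩ ⟨m, by omega⟩) :
    ∀ j, j ≤ m → w j ≤ w m :=
  fun j hj => h j (by show min 0 m ≤ j; omega) (by show j ≤ max 0 m; omega)

lemma MM_top_intro {m : ℕ} {w : ℕ → ℕ} (h : ∀ j, j ≤ m → w j ≤ w m) :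
    MM (m+1) w ⟨0, by omega⟩ ⟨m, by omega⟩ := by
  intro j hj1 hj2
  exact h j (by revert hj2; show j ≤ max 0 m → _; omega)

lemma swb_shift_eq {m r : ℕ} (hr : r < m) (u : ℕ → ℕ) :
    ∀ j, j < m - r → swb m u (r+1+j) = swb (m-1-r) (fun j => u (r+1+j)) j := by
  intro j hj
  unfold swb
  by_cases hjm : j = m - 1 - r
  · rw [if_pos (by omega), if_pos hjm]
    exact congrArg u (by omega)
  · rw [if_neg (by omega), if_neg hjm]

lemma MM_chain_restr {m : ℕ} {w w' : ℕ → ℕ} (h : MM (m+1) w = MM (m+1) w') :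
    MM m w = MM m w' := by
  funext x y
  have hx := x.2; have hy := y.2
  apply propext
  rw [MM_val w x y (⟨x.val, by omega⟩ : Fin (m+1)) ⟨y.val, by omega⟩ rfl rfl, h]
  exact (MM_val w' x y ⟨x.val, by omega⟩ ⟨y.val, by omega⟩ rfl rfl).symm

lemma MM_seg_restr {m r : ℕ} (hr : r ≤ m) {w w' : ℕ → ℕ} (h : MM (m+1) w = MM (m+1) w') :
    MM r w = MM r w' := by
  funext x y
  have hx := x.2; have hy := y.2
  apply propext
  rw [MM_val w x y (⟨x.val, by omega⟩ : Fin (m+1)) ⟨y.val, by omega⟩ rfl rfl, h]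
  exact (MM_val w' x y ⟨x.val, by omega⟩ ⟨y.val, by omega⟩ rfl rfl).symm

lemma MM_shift_restr {m r : ℕ} (hr : r < m + 1) {w w' : ℕ → ℕ}
    (h : MM (m+1) w = MM (m+1) w') :
    MM (m - r) (fun j => w (r+1+j)) = MM (m - r) (fun j => w' (r+1+j)) := by
  funext x y
  have hx := x.2; have hy := y.2
  apply propext
  rw [← MM_restrict (k := m+1) (c := r+1) (s := m - r) (by omega) w x y, h]
  exact MM_restrict (k := m+1) (c := r+1) (s := m - r) (by omega) w' x y

/-- Extraction for case 1: global maximum on a chain vertex. -/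
lemma ext1 {m r r' : ℕ} (hr : r < m) (hr' : r' < m) {w w' : ℕ → ℕ}
    (hmax : ∀ j, j < m+2 → j ≠ r → w j < w r)
    (hmax' : ∀ j, j < m+2 → j ≠ r' → w' j < w' r')
    (hP : Phi m w = Phi m w') :
    r = r' ∧ MM r w = MM r w' ∧
    MM (m - r) (fun j => w (r+1+j)) = MM (m - r) (fun j => w' (r+1+j)) ∧
    MM (m - r) (swb (m-1-r) (fun j => w (r+1+j)))
      = MM (m - r) (swb (m-1-r) (fun j => w' (r+1+j))) := by
  have comp1 : MM (m+1) w = MM (m+1) w' := congrArg Prod.fst hP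
  have comp2 : MM (m+1) (swb m w) = MM (m+1) (swb m w') := congrArg Prod.snd hP
  have hrr : r = r' := by
    refine max_unique (k := m + 1) (by omega) (by omega) ?_ ?_ comp1
    · exact fun j hj hne => hmax j (by omega) hne
    · exact fun j hj hne => hmax' j (by omega) hne
  subst hrr
  refine ⟨rfl, MM_seg_restr (by omega) comp1, MM_shift_restr (by omega) comp1, ?_⟩
  have e : MM (m - r) (fun j => swb m w (r+1+j))
      = MM (m - r) (swb (m-1-r) (fun j => w (r+1+j))) := MM_congOn (swb_shift_eq hr w)
  have e' : MM (m - r) (fun j => swb m w' (r+1+j))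
      = MM (m - r) (swb (m-1-r) (fun j => w' (r+1+j))) := MM_congOn (swb_shift_eq hr w')
  rw [← e, ← e']
  exact MM_shift_restr (by omega) comp2

/-- Extraction for case 2: `a` dominates, `b`-chain has peak at `r < m`. -/
lemma ext2 {m r r' : ℕ} (hr : r < m) (hr' : r' < m) {w w' : ℕ → ℕ}
    (hB : ∀ j, j < m+1 → j ≠ r → swb m w j < swb m w r)
    (hB' : ∀ j, j < m+1 → j ≠ r' → swb m w' j < swb m w' r')
    (hP : Phi m w = Phi m w') :
    r = r' ∧ MM r w = MM r w' ∧
    MM (m - r) (fun j => swb m w (r+1+j)) = MM (m - r) (fun j => swb m w' (r+1+j)) := by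
  have comp2 : MM (m+1) (swb m w) = MM (m+1) (swb m w') := congrArg Prod.snd hP
  have hrr : r = r' := max_unique (k := m + 1) (by omega) (by omega) hB hB' comp2
  subst hrr
  refine ⟨rfl, ?_, MM_shift_restr (by omega) comp2⟩
  have e : MM r (swb m w) = MM r w :=
    MM_congOn (fun j hj => by unfold swb; rw [if_neg (by omega)])
  have e' : MM r (swb m w') = MM r w' :=
    MM_congOn (fun j hj => by unfold swb; rw [if_neg (by omega)])
  rw [← e, ← e']
  exact MM_seg_restr (by omega) comp2

/-- Extraction for case 3: `b` dominates, `a`-chain has peak at `r < m`. -/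
lemma ext3 {m r r' : ℕ} (hr : r < m) (hr' : r' < m) {w w' : ℕ → ℕ}
    (hA : ∀ j, j < m+1 → j ≠ r → w j < w r)
    (hA' : ∀ j, j < m+1 → j ≠ r' → w' j < w' r')
    (hP : Phi m w = Phi m w') :
    r = r' ∧ MM r w = MM r w' ∧
    MM (m - r) (fun j => w (r+1+j)) = MM (m - r) (fun j => w' (r+1+j)) := by
  have comp1 : MM (m+1) w = MM (m+1) w' := congrArg Prod.fst hP
  have hrr : r = r' := max_unique (k := m + 1) (by omega) (by omega) hA hA' comp1
  subst hrr
  exact ⟨rfl, MM_seg_restr (by omega) comp1, MM_shift_restr (by omega) comp1⟩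

lemma ext_chain {m : ℕ} {w w' : ℕ → ℕ} (hP : Phi m w = Phi m w') :
    MM m w = MM m w' :=
  MM_chain_restr (congrArg Prod.fst hP)

lemma MM_joinw_left (r s : ℕ) (u v : ℕ → ℕ) : MM r (joinw r s u v) = MM r u :=
  MM_relord (fun a b ha hb => by rw [joinw_left ha, joinw_left hb]; omega)

lemma MM_joinw_right (r s : ℕ) (u v : ℕ → ℕ) :
    MM s (fun j => joinw r s u v (r + 1 + j)) = MM s v :=
  MM_relord (fun a b ha hb => by simp only [joinw_right]; omega)

lemma da1 {m r : ℕ} (hr : r < m) {w : ℕ → ℕ}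
    (hmax : ∀ j, j < m+2 → j ≠ r → w j < w r) :
    ¬ DA m (Phi m w) ∧ ¬ DB m (Phi m w) := by
  constructor
  · intro h
    have := MM_top_imp h r (by omega)
    have := hmax m (by omega) (by omega)
    omega
  · intro h
    have h2 := MM_top_imp h r (by omega)
    have e1 : swb m w r = w r := by unfold swb; rw [if_neg (by omega)]
    have e2 : swb m w m = w (m+1) := by unfold swb; rw [if_pos rfl]
    rw [e1, e2] at h2
    have := hmax (m+1) (by omega) (by omega)
    omega

lemma da2 {m r : ℕ} (hr : r < m) {w : ℕ → ℕ}
    (hA : ∀ j, j < m → w j < w m)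
    (hB : ∀ j, j < m+1 → j ≠ r → swb m w j < swb m w r) :
    DA m (Phi m w) ∧ ¬ DB m (Phi m w) := by
  constructor
  · apply MM_top_intro
    intro j hj
    rcases eq_or_lt_of_le hj with rfl | hlt
    · exact le_refl _
    · exact (hA j hlt).le
  · intro h
    have h2 := MM_top_imp h r (by omega)
    have := hB m (by omega) (by omega)
    omega

lemma da3 {m r : ℕ} (hr : r < m) {w : ℕ → ℕ}
    (hA : ∀ j, j < m+1 → j ≠ r → w j < w r)
    (hB : ∀ j, j < m → w j < w (m+1)) :
    ¬ DA m (Phi m w) ∧ DB m (Phi m w) := by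
  constructor
  · intro h
    have := MM_top_imp h r (by omega)
    have := hA m (by omega) (by omega)
    omega
  · apply MM_top_intro
    intro j hj
    have e2 : swb m w m = w (m+1) := by unfold swb; rw [if_pos rfl]
    rcases eq_or_lt_of_le hj with rfl | hlt
    · exact le_refl _
    · have e1 : swb m w j = w j := by unfold swb; rw [if_neg (by omega)]
      rw [e1, e2]
      exact (hB j hlt).le

lemma da4 {m : ℕ} {w : ℕ → ℕ}
    (hA : ∀ j, j < m → w j < w m) (hB : ∀ j, j < m → w j < w (m+1)) :
    DA m (Phi m w) ∧ DB m (Phi m w) := by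
  constructor
  · apply MM_top_intro
    intro j hj
    rcases eq_or_lt_of_le hj with rfl | hlt
    · exact le_refl _
    · exact (hA j hlt).le
  · apply MM_top_intro
    intro j hj
    have e2 : swb m w m = w (m+1) := by unfold swb; rw [if_pos rfl]
    rcases eq_or_lt_of_le hj with rfl | hlt
    · exact le_refl _
    · have e1 : swb m w j = w j := by unfold swb; rw [if_neg (by omega)]
      rw [e1, e2]
      exact (hB j hlt).le

lemma swb_injOn {m : ℕ} {w : ℕ → ℕ} (hw : Set.InjOn w (Set.Iio (m+2))) :
    Set.InjOn (swb m w) (Set.Iio (m+1)) := by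
  intro a ha b hb hab
  simp only [mem_Iio] at ha hb
  unfold swb at hab
  by_cases ham : a = m <;> by_cases hbm : b = m
  · omega
  · rw [if_pos ham, if_neg hbm] at hab
    have := hw (show (m+1 : ℕ) ∈ Set.Iio (m+2) by simp) (show b ∈ Set.Iio (m+2) by simp; omega) hab
    omega
  · rw [if_neg ham, if_pos hbm] at hab
    have := hw (show a ∈ Set.Iio (m+2) by simp; omega) (show (m+1 : ℕ) ∈ Set.Iio (m+2) by simp) hab
    omega
  · rw [if_neg ham, if_neg hbm] at hab
    exact hw (show a ∈ Set.Iio (m+2) by simp; omega) (show b ∈ Set.Iio (m+2) by simp; omega) hab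

def TD (m : ℕ) : Type :=
  ((i : Fin m) × (↥(SS (i:ℕ)) × ↥(SD (m - 1 - (i:ℕ))))) ⊕
  (((t : Fin m) × (↥(SS (t:ℕ)) × ↥(SS (m - (t:ℕ))))) ⊕
  (((t : Fin m) × (↥(SS (t:ℕ)) × ↥(SS (m - (t:ℕ))))) ⊕ ↥(SS m)))

lemma w1_max {m i : ℕ} (hi : i < m) (u v : ℕ → ℕ) :
    ∀ j, j < m+2 → j ≠ i → joinw i (m+1-i) u v j < joinw i (m+1-i) u v i :=
  fun j hj hne => joinw_max j (by omega) hne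

lemma shift_w1 (i s : ℕ) (u v : ℕ → ℕ) :
    (fun j => joinw i s u v (i+1+j)) = fun j => 2 * v j + 1 :=
  funext (fun j => joinw_right j)

noncomputable def BD (m : ℕ) : TD m → ↥(SD m) := fun t =>
  match t with
  | Sum.inl ⟨i, L, P⟩ =>
      ⟨Phi m (joinw (i:ℕ) (m + 1 - (i:ℕ)) L.2.choose P.2.choose),
       ⟨joinw (i:ℕ) (m + 1 - (i:ℕ)) L.2.choose P.2.choose, by
          have hv : Set.InjOn P.2.choose (Set.Iio (m + 1 - (i:ℕ))) := fun a ha b hb hab =>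
            P.2.choose_spec.1 (by simp only [Set.mem_Iio] at ha ⊢; have := i.2; omega)
              (by simp only [Set.mem_Iio] at hb ⊢; have := i.2; omega) hab
          have h := joinw_injOn L.2.choose_spec.1 hv
          intro a ha b hb hab
          exact h (by simp only [Set.mem_Iio] at ha ⊢; have := i.2; omega)
            (by simp only [Set.mem_Iio] at hb ⊢; have := i.2; omega) hab, rfl⟩⟩
  | Sum.inr (Sum.inl ⟨t, L, R⟩) =>
      ⟨Phi m (c2w m (t:ℕ) L.2.choose R.2.choose),
       ⟨_, c2w_injOn t.2 L.2.choose_spec.1 R.2.choose_spec.1, rfl⟩⟩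
  | Sum.inr (Sum.inr (Sum.inl ⟨t, L, R⟩)) =>
      ⟨Phi m (c3w m (t:ℕ) L.2.choose R.2.choose),
       ⟨_, c3w_injOn t.2 L.2.choose_spec.1 R.2.choose_spec.1, rfl⟩⟩
  | Sum.inr (Sum.inr (Sum.inr L)) =>
      ⟨Phi m (c4w m L.2.choose),
       ⟨_, c4w_injOn L.2.choose_spec.1, rfl⟩⟩

lemma BD_inj (m : ℕ) : Function.Injective (BD m) := by
  rintro (⟨i, L, P⟩ | ⟨t, L, R⟩ | ⟨t, L, R⟩ | L) (⟨i', L', P'⟩ | ⟨t', L', R'⟩ | ⟨t', L', R'⟩ | L') h <;>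
    have heq := congrArg Subtype.val h
  -- 1,1
  · simp only [BD] at heq
    obtain ⟨hii, hLq, hD1, hD2⟩ := ext1 i.2 i'.2
      (w1_max i.2 L.2.choose P.2.choose) (w1_max i'.2 L'.2.choose P'.2.choose) heq
    have hif : i = i' := Fin.ext hii
    subst hif
    have hL2 : L.1 = L'.1 := by
      rw [L.2.choose_spec.2, L'.2.choose_spec.2]
      rw [← MM_joinw_left (i:ℕ) (m+1-(i:ℕ)) L.2.choose P.2.choose,
          ← MM_joinw_left (i:ℕ) (m+1-(i:ℕ)) L'.2.choose P'.2.choose]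
      exact hLq
    have hvv : MM (m - (i:ℕ)) P.2.choose = MM (m - (i:ℕ)) P'.2.choose := by
      have e1 : MM (m - (i:ℕ)) (fun j => 2 * P.2.choose j + 1) = MM (m - (i:ℕ)) P.2.choose :=
        MM_relord (fun a b _ _ => by omega)
      have e1' : MM (m - (i:ℕ)) (fun j => 2 * P'.2.choose j + 1) = MM (m - (i:ℕ)) P'.2.choose :=
        MM_relord (fun a b _ _ => by omega)
      rw [← e1, ← e1', ← shift_w1 (i:ℕ) (m+1-(i:ℕ)) L.2.choose P.2.choose,
        ← shift_w1 (i:ℕ) (m+1-(i:ℕ)) L'.2.choose P'.2.choose]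
      exact hD1
    have hss : MM (m - (i:ℕ)) (swb (m-1-(i:ℕ)) P.2.choose)
        = MM (m - (i:ℕ)) (swb (m-1-(i:ℕ)) P'.2.choose) := by
      have e1 : MM (m - (i:ℕ)) (fun j => 2 * swb (m-1-(i:ℕ)) P.2.choose j + 1)
          = MM (m - (i:ℕ)) (swb (m-1-(i:ℕ)) P.2.choose) := MM_relord (fun a b _ _ => by omega)
      have e1' : MM (m - (i:ℕ)) (fun j => 2 * swb (m-1-(i:ℕ)) P'.2.choose j + 1)
          = MM (m - (i:ℕ)) (swb (m-1-(i:ℕ)) P'.2.choose) := MM_relord (fun a b _ _ => by omega)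
      rw [← e1, ← e1', ← swb_scale, ← swb_scale,
        ← shift_w1 (i:ℕ) (m+1-(i:ℕ)) L.2.choose P.2.choose,
        ← shift_w1 (i:ℕ) (m+1-(i:ℕ)) L'.2.choose P'.2.choose]
      exact hD2
    have hP2 : P.1 = P'.1 := by
      rw [P.2.choose_spec.2, P'.2.choose_spec.2]
      unfold Phi
      have hm : (m - 1 - (i:ℕ)) + 1 = m - (i:ℕ) := by have := i.2; omega
      exact Prod.ext (MM_transport hm.symm hvv) (MM_transport hm.symm hss)
    exact congrArg Sum.inl (congrArg (Sigma.mk i)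
      (by rw [show L = L' from Subtype.ext hL2, show P = P' from Subtype.ext hP2]))
  -- 1,2
  · exfalso
    simp only [BD] at heq
    have d1 := da1 i.2 (w1_max i.2 L.2.choose P.2.choose)
    have d2 := da2 (w := c2w m (t':ℕ) L'.2.choose R'.2.choose) t'.2 (c2w_hA t'.2) (c2w_hB t'.2)
    rw [heq] at d1
    exact d1.1 d2.1
  -- 1,3
  · exfalso
    simp only [BD] at heq
    have d1 := da1 i.2 (w1_max i.2 L.2.choose P.2.choose)
    have d2 := da3 (w := c3w m (t':ℕ) L'.2.choose R'.2.choose) t'.2 (c3w_hA t'.2) (c3w_hB t'.2)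
    rw [heq] at d1
    exact d1.2 d2.2
  -- 1,4
  · exfalso
    simp only [BD] at heq
    have d1 := da1 i.2 (w1_max i.2 L.2.choose P.2.choose)
    have d2 := da4 (w := c4w m L'.2.choose) c4w_hA c4w_hB
    rw [heq] at d1
    exact d1.1 d2.1
  -- 2,1
  · exfalso
    simp only [BD] at heq
    have d1 := da2 (w := c2w m (t:ℕ) L.2.choose R.2.choose) t.2 (c2w_hA t.2) (c2w_hB t.2)
    have d2 := da1 i'.2 (w1_max i'.2 L'.2.choose P'.2.choose)
    rw [heq] at d1
    exact d2.1 d1.1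
  -- 2,2
  · simp only [BD] at heq
    obtain ⟨htt, hLq, hRq⟩ := ext2 t.2 t'.2 (c2w_hB t.2) (c2w_hB t'.2) heq
    have htf : t = t' := Fin.ext htt
    subst htf
    have hL2 : L.1 = L'.1 := by
      rw [L.2.choose_spec.2, L'.2.choose_spec.2]
      have e : ∀ (u v : ℕ → ℕ), MM (t:ℕ) (c2w m (t:ℕ) u v) = MM (t:ℕ) u := by
        intro u v
        rw [MM_congOn (fun j hj => c2w_chain (by have := t.2; omega)),
          MM_joinw_left]
      rw [← e L.2.choose R.2.choose, ← e L'.2.choose R'.2.choose]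
      exact hLq
    have hR2 : R.1 = R'.1 := by
      rw [R.2.choose_spec.2, R'.2.choose_spec.2]
      have e : ∀ (u v : ℕ → ℕ), MM (m - (t:ℕ)) (fun j => swb m (c2w m (t:ℕ) u v) ((t:ℕ)+1+j))
          = MM (m - (t:ℕ)) v := by
        intro u v
        rw [MM_congOn (fun j hj => c2w_swb (by omega)), MM_joinw_right]
      rw [← e L.2.choose R.2.choose, ← e L'.2.choose R'.2.choose]
      exact hRq
    exact congrArg (fun x => Sum.inr (Sum.inl x)) (congrArg (Sigma.mk t)
      (by rw [show L = L' from Subtype.ext hL2, show R = R' from Subtype.ext hR2]))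
  -- 2,3
  · exfalso
    simp only [BD] at heq
    have d1 := da2 (w := c2w m (t:ℕ) L.2.choose R.2.choose) t.2 (c2w_hA t.2) (c2w_hB t.2)
    have d2 := da3 (w := c3w m (t':ℕ) L'.2.choose R'.2.choose) t'.2 (c3w_hA t'.2) (c3w_hB t'.2)
    rw [heq] at d1
    exact d2.1 d1.1
  -- 2,4
  · exfalso
    simp only [BD] at heq
    have d1 := da2 (w := c2w m (t:ℕ) L.2.choose R.2.choose) t.2 (c2w_hA t.2) (c2w_hB t.2)
    have d2 := da4 (w := c4w m L'.2.choose) c4w_hA c4w_hB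
    rw [heq] at d1
    exact d1.2 d2.2
  -- 3,1
  · exfalso
    simp only [BD] at heq
    have d1 := da3 (w := c3w m (t:ℕ) L.2.choose R.2.choose) t.2 (c3w_hA t.2) (c3w_hB t.2)
    have d2 := da1 i'.2 (w1_max i'.2 L'.2.choose P'.2.choose)
    rw [heq] at d1
    exact d2.2 d1.2
  -- 3,2
  · exfalso
    simp only [BD] at heq
    have d1 := da3 (w := c3w m (t:ℕ) L.2.choose R.2.choose) t.2 (c3w_hA t.2) (c3w_hB t.2)
    have d2 := da2 (w := c2w m (t':ℕ) L'.2.choose R'.2.choose) t'.2 (c2w_hA t'.2) (c2w_hB t'.2)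
    rw [heq] at d1
    exact d1.1 d2.1
  -- 3,3
  · simp only [BD] at heq
    obtain ⟨htt, hLq, hRq⟩ := ext3 t.2 t'.2 (c3w_hA t.2) (c3w_hA t'.2) heq
    have htf : t = t' := Fin.ext htt
    subst htf
    have hL2 : L.1 = L'.1 := by
      rw [L.2.choose_spec.2, L'.2.choose_spec.2]
      have e : ∀ (u v : ℕ → ℕ), MM (t:ℕ) (c3w m (t:ℕ) u v) = MM (t:ℕ) u := by
        intro u v
        rw [MM_congOn (fun j hj => c3w_chain (by have := t.2; omega)),
          MM_joinw_left]
      rw [← e L.2.choose R.2.choose, ← e L'.2.choose R'.2.choose]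
      exact hLq
    have hR2 : R.1 = R'.1 := by
      rw [R.2.choose_spec.2, R'.2.choose_spec.2]
      have e : ∀ (u v : ℕ → ℕ), MM (m - (t:ℕ)) (fun j => c3w m (t:ℕ) u v ((t:ℕ)+1+j))
          = MM (m - (t:ℕ)) v := by
        intro u v
        rw [MM_congOn (fun j hj => c3w_chain (by omega)), MM_joinw_right]
      rw [← e L.2.choose R.2.choose, ← e L'.2.choose R'.2.choose]
      exact hRq
    exact congrArg (fun x => Sum.inr (Sum.inr (Sum.inl x))) (congrArg (Sigma.mk t)
      (by rw [show L = L' from Subtype.ext hL2, show R = R' from Subtype.ext hR2]))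
  -- 3,4
  · exfalso
    simp only [BD] at heq
    have d1 := da3 (w := c3w m (t:ℕ) L.2.choose R.2.choose) t.2 (c3w_hA t.2) (c3w_hB t.2)
    have d2 := da4 (w := c4w m L'.2.choose) c4w_hA c4w_hB
    rw [heq] at d1
    exact d1.1 d2.1
  -- 4,1
  · exfalso
    simp only [BD] at heq
    have d1 := da4 (w := c4w m L.2.choose) c4w_hA c4w_hB
    have d2 := da1 i'.2 (w1_max i'.2 L'.2.choose P'.2.choose)
    rw [heq] at d1
    exact d2.1 d1.1
  -- 4,2
  · exfalso
    simp only [BD] at heq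
    have d1 := da4 (w := c4w m L.2.choose) c4w_hA c4w_hB
    have d2 := da2 (w := c2w m (t':ℕ) L'.2.choose R'.2.choose) t'.2 (c2w_hA t'.2) (c2w_hB t'.2)
    rw [heq] at d1
    exact d2.2 d1.2
  -- 4,3
  · exfalso
    simp only [BD] at heq
    have d1 := da4 (w := c4w m L.2.choose) c4w_hA c4w_hB
    have d2 := da3 (w := c3w m (t':ℕ) L'.2.choose R'.2.choose) t'.2 (c3w_hA t'.2) (c3w_hB t'.2)
    rw [heq] at d1
    exact d2.1 d1.1
  -- 4,4
  · simp only [BD] at heq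
    have hC := ext_chain heq
    have hL2 : L.1 = L'.1 := by
      rw [L.2.choose_spec.2, L'.2.choose_spec.2]
      have e : ∀ (u : ℕ → ℕ), MM m (c4w m u) = MM m u := by
        intro u
        rw [MM_congOn (fun j hj => c4w_chain hj)]
        exact MM_relord (fun a b _ _ => by omega)
      rw [← e L.2.choose, ← e L'.2.choose]
      exact hC
    exact congrArg (fun x => Sum.inr (Sum.inr (Sum.inr x))) (Subtype.ext hL2)

lemma BD_surj (m : ℕ) : Function.Surjective (BD m) := by
  rintro ⟨P, hP⟩
  obtain ⟨w, hw, rfl⟩ := hP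
  by_cases hA : ∀ j, j < m → w j < w m <;> by_cases hB : ∀ j, j < m → w j < w (m+1)
  · -- case 4
    have hLmem : MM m w ∈ SS m := ⟨w, hw.mono (fun a ha => by simp at ha ⊢; omega), rfl⟩
    refine ⟨Sum.inr (Sum.inr (Sum.inr ⟨MM m w, hLmem⟩)), Subtype.ext ?_⟩
    simp only [BD]
    set u := hLmem.choose with hu
    have spec := hLmem.choose_spec
    apply cong4 c4w_hA c4w_hB hA hB
    have e : MM m (c4w m u) = MM m u := by
      rw [MM_congOn (fun j hj => c4w_chain hj)]
      exact MM_relord (fun a b _ _ => by omega)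
    rw [e, hu]
    exact spec.2.symm
  · -- case 2 : a dominates, b-chain peak below m
    obtain ⟨r, hr1, hrmax⟩ := exists_strict_max (k := m+1) (by omega) (swb_injOn hw)
    have hrm : r < m := by
      rcases eq_or_ne r m with rfl | hne
      · exfalso
        apply hB
        intro j hj
        have := hrmax j (by omega) (by omega)
        unfold swb at this
        rw [if_neg (by omega), if_pos rfl] at this
        exact this
      · omega
    have hLmem : MM r w ∈ SS r := ⟨w, hw.mono (fun a ha => by simp at ha ⊢; omega), rfl⟩
    have hRmem : MM (m - r) (fun j => swb m w (r+1+j)) ∈ SS (m - r) :=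
      ⟨fun j => swb m w (r+1+j), fun a ha b hb hab => by
        simp only [mem_Iio] at ha hb
        have := swb_injOn hw (show r+1+a ∈ Set.Iio (m+1) by simp; omega)
          (show r+1+b ∈ Set.Iio (m+1) by simp; omega) hab
        omega, rfl⟩
    refine ⟨Sum.inr (Sum.inl ⟨⟨r, hrm⟩, ⟨MM r w, hLmem⟩, ⟨_, hRmem⟩⟩), Subtype.ext ?_⟩
    simp only [BD]
    apply cong2 hrm (c2w_hA hrm) hA (c2w_hB hrm) hrmax
    · have e : MM r (c2w m r hLmem.choose hRmem.choose) = MM r hLmem.choose := by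
        rw [MM_congOn (fun j hj => c2w_chain (by omega)), MM_joinw_left]
      rw [e, ← hLmem.choose_spec.2]
    · have e : MM (m - r) (fun j => swb m (c2w m r hLmem.choose hRmem.choose) (r+1+j))
          = MM (m - r) hRmem.choose := by
        rw [MM_congOn (fun j hj => c2w_swb (by omega)), MM_joinw_right]
      rw [e, ← hRmem.choose_spec.2]
  · -- case 3 : b dominates, a-chain peak below m
    obtain ⟨r, hr1, hrmax⟩ := exists_strict_max (k := m+1) (by omega)
      (hw.mono (fun a ha => by simp at ha ⊢; omega))
    have hrm : r < m := by
      rcases eq_or_ne r m with rfl | hne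
      · exact absurd (fun j hj => hrmax j (by omega) (by omega)) hA
      · omega
    have hLmem : MM r w ∈ SS r := ⟨w, hw.mono (fun a ha => by simp at ha ⊢; omega), rfl⟩
    have hRmem : MM (m - r) (fun j => w (r+1+j)) ∈ SS (m - r) :=
      ⟨fun j => w (r+1+j), fun a ha b hb hab => by
        simp only [mem_Iio] at ha hb
        have := hw (show r+1+a ∈ Set.Iio (m+2) by simp; omega)
          (show r+1+b ∈ Set.Iio (m+2) by simp; omega) hab
        omega, rfl⟩
    refine ⟨Sum.inr (Sum.inr (Sum.inl ⟨⟨r, hrm⟩, ⟨MM r w, hLmem⟩, ⟨_, hRmem⟩⟩)), Subtype.ext ?_⟩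
    simp only [BD]
    apply cong3 hrm (c3w_hA hrm) hrmax (c3w_hB hrm) hB
    · have e : MM r (c3w m r hLmem.choose hRmem.choose) = MM r hLmem.choose := by
        rw [MM_congOn (fun j hj => c3w_chain (by omega)), MM_joinw_left]
      rw [e, ← hLmem.choose_spec.2]
    · have e : MM (m - r) (fun j => c3w m r hLmem.choose hRmem.choose (r+1+j))
          = MM (m - r) hRmem.choose := by
        rw [MM_congOn (fun j hj => c3w_chain (by omega)), MM_joinw_right]
      rw [e, ← hRmem.choose_spec.2]
  · -- case 1 : global max on a chain vertex
    obtain ⟨g, hg2, hgmax⟩ := exists_strict_max (k := m+2) (by omega) hw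
    have hgm : g < m := by
      rcases eq_or_ne g m with rfl | hne
      · exact absurd (fun j hj => hgmax j (by omega) (by omega)) hA
      · rcases eq_or_ne g (m+1) with rfl | hne1
        · exact absurd (fun j hj => hgmax j (by omega) (by omega)) hB
        · omega
    have hLmem : MM g w ∈ SS g := ⟨w, hw.mono (fun a ha => by simp at ha ⊢; omega), rfl⟩
    have hPmem : Phi (m - 1 - g) (fun j => w (g+1+j)) ∈ SD (m - 1 - g) :=
      ⟨fun j => w (g+1+j), fun a ha b hb hab => by
        simp only [mem_Iio] at ha hb
        have := hw (show g+1+a ∈ Set.Iio (m+2) by simp; omega)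
          (show g+1+b ∈ Set.Iio (m+2) by simp; omega) hab
        omega, rfl⟩
    refine ⟨Sum.inl ⟨⟨g, hgm⟩, ⟨MM g w, hLmem⟩, ⟨_, hPmem⟩⟩, Subtype.ext ?_⟩
    simp only [BD]
    have specP := hPmem.choose_spec.2
    have comp1 : MM ((m-1-g)+1) (fun j => w (g+1+j)) = MM ((m-1-g)+1) hPmem.choose :=
      congrArg Prod.fst specP
    have comp2 : MM ((m-1-g)+1) (swb (m-1-g) (fun j => w (g+1+j)))
        = MM ((m-1-g)+1) (swb (m-1-g) hPmem.choose) := congrArg Prod.snd specP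
    have hm1 : (m - 1 - g) + 1 = m - g := by omega
    apply cong1 hgm (w1_max hgm hLmem.choose hPmem.choose) hgmax
    · have e : MM g (joinw g (m+1-g) hLmem.choose hPmem.choose) = MM g hLmem.choose :=
        MM_joinw_left _ _ _ _
      rw [e, ← hLmem.choose_spec.2]
    · have e : MM (m - g) (fun j => joinw g (m+1-g) hLmem.choose hPmem.choose (g+1+j))
          = MM (m - g) hPmem.choose := by
        rw [shift_w1]
        exact MM_relord (fun a b _ _ => by omega)
      rw [e]
      exact (MM_transport hm1 comp1).symm
    · have e : MM (m - g) (swb (m-1-g) (fun j => joinw g (m+1-g) hLmem.choose hPmem.choose (g+1+j)))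
          = MM (m - g) (swb (m-1-g) hPmem.choose) := by
        rw [shift_w1, swb_scale]
        exact MM_relord (fun a b _ _ => by omega)
      rw [e]
      exact (MM_transport hm1 comp2).symm

theorem card_SD : ∀ m, Nat.card ↥(SD m) + 3 * catalan (m+1) = 2 * catalan (m+2) := by
  intro m
  induction m using Nat.strong_induction_on with
  | _ m IH =>
    have hbij : Function.Bijective (BD m) := ⟨BD_inj m, BD_surj m⟩
    have hcard : Nat.card ↥(SD m) = Nat.card (TD m) := (Nat.card_eq_of_bijective _ hbij).symm
    rw [hcard]
    unfold TD
    rw [Nat.card_sum, Nat.card_sum, Nat.card_sum, mycard_sigma, mycard_sigma]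
    simp only [Nat.card_prod, card_SS]
    -- abbreviations
    have hIH : ∀ i : Fin m,
        catalan (i:ℕ) * Nat.card ↥(SD (m - 1 - (i:ℕ))) + 3 * (catalan (i:ℕ) * catalan (m - (i:ℕ)))
        = 2 * (catalan (i:ℕ) * catalan (m + 1 - (i:ℕ))) := by
      intro i
      have hi := i.2
      have h' := IH (m - 1 - (i:ℕ)) (by omega)
      have h : Nat.card ↥(SD (m - 1 - (i:ℕ))) + 3 * catalan (m - (i:ℕ))
          = 2 * catalan (m + 1 - (i:ℕ)) := by
        rw [show m - (i:ℕ) = (m - 1 - (i:ℕ)) + 1 by omega,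
          show m + 1 - (i:ℕ) = (m - 1 - (i:ℕ)) + 2 by omega]
        exact h'
      calc catalan (i:ℕ) * Nat.card ↥(SD (m - 1 - (i:ℕ)))
            + 3 * (catalan (i:ℕ) * catalan (m - (i:ℕ)))
          = catalan (i:ℕ) * (Nat.card ↥(SD (m - 1 - (i:ℕ))) + 3 * catalan (m - (i:ℕ))) := by ring
        _ = catalan (i:ℕ) * (2 * catalan (m + 1 - (i:ℕ))) := by rw [h]
        _ = 2 * (catalan (i:ℕ) * catalan (m + 1 - (i:ℕ))) := by ring
    have hsum : (∑ i : Fin m, catalan (i:ℕ) * Nat.card ↥(SD (m - 1 - (i:ℕ))))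
        + 3 * (∑ i : Fin m, catalan (i:ℕ) * catalan (m - (i:ℕ)))
        = 2 * (∑ i : Fin m, catalan (i:ℕ) * catalan (m + 1 - (i:ℕ))) := by
      rw [Finset.mul_sum, Finset.mul_sum, ← Finset.sum_add_distrib]
      exact Finset.sum_congr rfl (fun i _ => hIH i)
    have hcatA : catalan (m+1) = (∑ i : Fin m, catalan (i:ℕ) * catalan (m - (i:ℕ))) + catalan m := by
      rw [catalan_succ, Fin.sum_univ_castSucc]
      simp only [Fin.coe_castSucc, Fin.val_last, Nat.sub_self, catalan_zero, mul_one]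
    have hcatB : catalan (m+2) = (∑ i : Fin m, catalan (i:ℕ) * catalan (m + 1 - (i:ℕ)))
        + catalan m + catalan (m+1) := by
      rw [show m + 2 = (m+1) + 1 from rfl, catalan_succ, Fin.sum_univ_castSucc,
        Fin.sum_univ_castSucc]
      simp only [Fin.coe_castSucc, Fin.val_last, Nat.sub_self, catalan_zero, mul_one,
        Nat.add_sub_cancel_left, catalan_one]
      try first
      | ring
      | (rw [show m + 1 - m = 1 by omega, catalan_one, mul_one]; ring)
    omega

section Translation

variable {m : ℕ}

lemma D1le_iff (a b : Fin (m+2)) : D1le (m+2) a b ↔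
    (a.val = b.val ∨ (a.val ≤ b.val ∧ b.val < m) ∨ (a.val < m ∧ (b.val = m ∨ b.val = m+1))) := by
  unfold D1le
  rw [Fin.ext_iff]
  omega

lemma D1le_le {a b : Fin (m+2)} (h : D1le (m+2) a b) : a.val ≤ b.val := by
  rw [D1le_iff] at h
  have := a.2; have := b.2
  omega

def va (m : ℕ) (x : Fin (m+1)) : Fin (m+2) := ⟨x.val, by omega⟩

def vb (m : ℕ) (x : Fin (m+1)) : Fin (m+2) :=
  ⟨if x.val = m then m+1 else x.val, by have := x.2; split <;> omega⟩

lemma va_val (x : Fin (m+1)) : (va m x).val = x.val := rfl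

lemma vb_val (x : Fin (m+1)) : (vb m x).val = if x.val = m then m+1 else x.val := rfl

lemma w_vb (w : ℕ → ℕ) (x : Fin (m+1)) : w ((vb m x).val) = swb m w x.val := by
  rw [vb_val]
  unfold swb
  by_cases h : x.val = m
  · rw [if_pos h, if_pos h]
  · rw [if_neg h, if_neg h]

lemma vale {x j : Fin (m+1)} (h : x.val ≤ j.val) : D1le (m+2) (va m x) (va m j) := by
  rw [D1le_iff, va_val, va_val]
  have := x.2; have := j.2
  omega

lemma vble {x j : Fin (m+1)} (h : x.val ≤ j.val) : D1le (m+2) (vb m x) (vb m j) := by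
  rw [D1le_iff, vb_val, vb_val]
  have hx2 := x.2; have hj2 := j.2
  by_cases hx : x.val = m
  · rw [if_pos hx]
    by_cases hj : j.val = m
    · rw [if_pos hj]; omega
    · rw [if_neg hj]; omega
  · rw [if_neg hx]
    by_cases hj : j.val = m
    · rw [if_pos hj]; omega
    · rw [if_neg hj]; omega

lemma intervalA (x y : Fin (m+1)) (k : Fin (m+2)) :
    (D1le (m+2) (va m x) k ∧ D1le (m+2) k (va m y)) ↔ (x.val ≤ k.val ∧ k.val ≤ y.val) := by
  rw [D1le_iff, D1le_iff, va_val, va_val]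
  have := x.2; have := y.2; have := k.2
  omega

lemma intervalB (x y : Fin (m+1)) (k : Fin (m+2)) :
    (D1le (m+2) (vb m x) k ∧ D1le (m+2) k (vb m y)) ↔
    (∃ j : Fin (m+1), x.val ≤ j.val ∧ j.val ≤ y.val ∧ k = vb m j) := by
  constructor
  · rintro ⟨h1, h2⟩
    rw [D1le_iff, vb_val] at h1 h2
    have hx := x.2; have hy := y.2; have hk := k.2
    by_cases hkm1 : k.val = m + 1
    · have hym : y.val = m := by
        by_cases hym : y.val = m
        · exact hym
        · rw [if_neg hym] at h2; omega
      refine ⟨⟨m, by omega⟩, by show x.val ≤ m; omega, by show (m:ℕ) ≤ y.val; omega, ?_⟩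
      apply Fin.ext
      rw [vb_val]
      show k.val = if (⟨m, by omega⟩ : Fin (m+1)).val = m then m+1 else _
      rw [if_pos rfl]
      omega
    · have hkm : k.val ≠ m := by
        intro hkm
        by_cases hym : y.val = m
        · rw [if_pos hym] at h2; omega
        · rw [if_neg hym] at h2; omega
      have hx1 : x.val ≤ k.val := by
        by_cases hxm : x.val = m
        · rw [if_pos hxm] at h1; omega
        · rw [if_neg hxm] at h1; omega
      have hy1 : k.val ≤ y.val := by
        by_cases hym : y.val = m
        · omega
        · rw [if_neg hym] at h2; omega
      refine ⟨⟨k.val, by omega⟩, by show x.val ≤ k.val; omega, by show k.val ≤ y.val; omega, ?_⟩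
      apply Fin.ext
      rw [vb_val]
      show k.val = if (⟨k.val, by omega⟩ : Fin (m+1)).val = m then m+1 else _
      rw [if_neg (by show k.val ≠ m; omega)]
  · rintro ⟨j, hj1, hj2, rfl⟩
    exact ⟨vble hj1, vble hj2⟩

def rhoRel (n : ℕ) (w : ℕ → ℕ) : Fin n → Fin n → Prop :=
  fun x y => x = y ∨ w x.val < w y.val

def DecT (m : ℕ) (w : ℕ → ℕ) (x y : Fin (m+2)) : Prop :=
  D1le (m+2) y x ∧ ∀ k : Fin (m+2), D1le (m+2) y k → D1le (m+2) k x → w k.val ≤ w y.val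

def IncT (m : ℕ) (w : ℕ → ℕ) (x y : Fin (m+2)) : Prop :=
  D1le (m+2) x y ∧ ∀ k : Fin (m+2), D1le (m+2) x k → D1le (m+2) k y → w k.val ≤ w y.val

lemma rho_le_iff {w : ℕ → ℕ} (hw : Set.InjOn w (Set.Iio (m+2))) {k y : Fin (m+2)} :
    rhoRel (m+2) w k y ↔ w k.val ≤ w y.val := by
  constructor
  · rintro (rfl | h)
    · exact le_refl _
    · exact h.le
  · intro h
    by_cases hky : k = y
    · exact Or.inl hky
    · refine Or.inr (lt_of_le_of_ne h (fun e => hky ?_))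
      exact Fin.ext (hw (by simp only [Set.mem_Iio]; exact k.2) (by simp only [Set.mem_Iio]; exact y.2) e)

lemma decT_iff {w : ℕ → ℕ} (hw : Set.InjOn w (Set.Iio (m+2))) (x y : Fin (m+2)) :
    DecRelG (D1le (m+2)) (rhoRel (m+2) w) x y ↔ DecT m w x y := by
  unfold DecRelG DecT
  refine and_congr_right (fun _ => ?_)
  constructor
  · intro h k h1 h2
    exact (rho_le_iff hw).mp (h k h1 h2)
  · intro h k h1 h2
    exact (rho_le_iff hw).mpr (h k h1 h2)

lemma incT_iff {w : ℕ → ℕ} (hw : Set.InjOn w (Set.Iio (m+2))) (x y : Fin (m+2)) :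
    IncRelG (D1le (m+2)) (rhoRel (m+2) w) x y ↔ IncT m w x y := by
  unfold IncRelG IncT
  refine and_congr_right (fun _ => ?_)
  constructor
  · intro h k h1 h2
    exact (rho_le_iff hw).mp (h k h1 h2)
  · intro h k h1 h2
    exact (rho_le_iff hw).mpr (h k h1 h2)

lemma AInc {w : ℕ → ℕ} (x y : Fin (m+1)) (hxy : x.val ≤ y.val) :
    IncT m w (va m x) (va m y) ↔ MM (m+1) w x y := by
  unfold IncT
  constructor
  · rintro ⟨_, h⟩ j hj1 hj2
    have hy := y.2
    have hj : j ≤ y.val := by omega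
    have := h ⟨j, by omega⟩ ((intervalA x y ⟨j, by omega⟩).mpr ⟨by show x.val ≤ j; omega, by show (j:ℕ) ≤ y.val; omega⟩).1
      ((intervalA x y ⟨j, by omega⟩).mpr ⟨by show x.val ≤ j; omega, by show (j:ℕ) ≤ y.val; omega⟩).2
    exact this
  · intro h
    refine ⟨vale hxy, fun k hk1 hk2 => ?_⟩
    obtain ⟨h1, h2⟩ := (intervalA x y k).mp ⟨hk1, hk2⟩
    exact h k.val (by omega) (by omega)

lemma ADec {w : ℕ → ℕ} (x y : Fin (m+1)) (hxy : y.val ≤ x.val) :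
    DecT m w (va m x) (va m y) ↔ MM (m+1) w x y := by
  unfold DecT
  constructor
  · rintro ⟨_, h⟩ j hj1 hj2
    have hx := x.2
    have := h ⟨j, by omega⟩ ((intervalA y x ⟨j, by omega⟩).mpr ⟨by show y.val ≤ j; omega, by show (j:ℕ) ≤ x.val; omega⟩).1
      ((intervalA y x ⟨j, by omega⟩).mpr ⟨by show y.val ≤ j; omega, by show (j:ℕ) ≤ x.val; omega⟩).2
    exact this
  · intro h
    refine ⟨vale hxy, fun k hk1 hk2 => ?_⟩
    obtain ⟨h1, h2⟩ := (intervalA y x k).mp ⟨hk1, hk2⟩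
    exact h k.val (by omega) (by omega)

lemma BInc {w : ℕ → ℕ} (x y : Fin (m+1)) (hxy : x.val ≤ y.val) :
    IncT m w (vb m x) (vb m y) ↔ MM (m+1) (swb m w) x y := by
  unfold IncT
  constructor
  · rintro ⟨_, h⟩ j hj1 hj2
    have hy := y.2
    have hj : j ≤ y.val := by omega
    have hmem := (intervalB x y (vb m ⟨j, by omega⟩)).mpr
      ⟨⟨j, by omega⟩, by show x.val ≤ j; omega, by show (j:ℕ) ≤ y.val; omega, rfl⟩
    have := h (vb m ⟨j, by omega⟩) hmem.1 hmem.2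
    rw [w_vb w ⟨j, by omega⟩, w_vb w y] at this
    exact this
  · intro h
    refine ⟨vble hxy, fun k hk1 hk2 => ?_⟩
    obtain ⟨j, h1, h2, rfl⟩ := (intervalB x y k).mp ⟨hk1, hk2⟩
    rw [w_vb w j, w_vb w y]
    exact h j.val (by omega) (by omega)

lemma BDec {w : ℕ → ℕ} (x y : Fin (m+1)) (hxy : y.val ≤ x.val) :
    DecT m w (vb m x) (vb m y) ↔ MM (m+1) (swb m w) x y := by
  unfold DecT
  constructor
  · rintro ⟨_, h⟩ j hj1 hj2
    have hx := x.2
    have hmem := (intervalB y x (vb m ⟨j, by omega⟩)).mpr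
      ⟨⟨j, by omega⟩, by show y.val ≤ j; omega, by show (j:ℕ) ≤ x.val; omega, rfl⟩
    have := h (vb m ⟨j, by omega⟩) hmem.1 hmem.2
    rw [w_vb w ⟨j, by omega⟩, w_vb w y] at this
    exact this
  · intro h
    refine ⟨vble hxy, fun k hk1 hk2 => ?_⟩
    obtain ⟨j, h1, h2, rfl⟩ := (intervalB y x k).mp ⟨hk1, hk2⟩
    rw [w_vb w j, w_vb w y]
    exact h j.val (by omega) (by omega)

lemma key_forward {w w' : ℕ → ℕ}
    (hD : ∀ a b, DecT m w a b ↔ DecT m w' a b)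
    (hI : ∀ a b, IncT m w a b ↔ IncT m w' a b) : Phi m w = Phi m w' := by
  unfold Phi
  refine Prod.ext ?_ ?_
  · funext x y
    apply propext
    rcases le_total x.val y.val with h | h
    · exact (AInc x y h).symm.trans ((hI _ _).trans (AInc x y h))
    · exact (ADec x y h).symm.trans ((hD _ _).trans (ADec x y h))
  · funext x y
    apply propext
    rcases le_total x.val y.val with h | h
    · exact (BInc x y h).symm.trans ((hI _ _).trans (BInc x y h))
    · exact (BDec x y h).symm.trans ((hD _ _).trans (BDec x y h))

lemma key_backward {w w' : ℕ → ℕ} (hP : Phi m w = Phi m w') :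
    (∀ a b, DecT m w a b ↔ DecT m w' a b) ∧ (∀ a b, IncT m w a b ↔ IncT m w' a b) := by
  have comp1 : MM (m+1) w = MM (m+1) w' := congrArg Prod.fst hP
  have comp2 : MM (m+1) (swb m w) = MM (m+1) (swb m w') := congrArg Prod.snd hP
  constructor
  · intro x y
    by_cases hle : D1le (m+2) y x
    · have hyx := D1le_le hle
      by_cases hxb : x.val = m+1
      · have hyy : y.val ≠ m := by
          rw [D1le_iff] at hle
          have := y.2; omega
        have hy2 := y.2
        set xh : Fin (m+1) := (⟨m, by omega⟩ : Fin (m+1)) with hxh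
        set yh : Fin (m+1) := (⟨if y.val = m+1 then m else y.val, by split <;> omega⟩ : Fin (m+1)) with hyh
        have hx : x = vb m xh := by
          apply Fin.ext
          rw [vb_val]
          show x.val = if (m:ℕ) = m then m+1 else m
          rw [if_pos rfl, hxb]
        have hy : y = vb m yh := by
          apply Fin.ext
          rw [vb_val]
          show y.val = if (if y.val = m+1 then m else y.val) = m then m+1 else _
          by_cases h : y.val = m+1
          · rw [if_pos h, if_pos rfl, h]
          · rw [if_neg h, if_neg hyy]
            rw [hyh]
            show y.val = if y.val = m+1 then m else y.val
            rw [if_neg h]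
        have hord : yh.val ≤ xh.val := by
          show (if y.val = m+1 then m else y.val) ≤ m
          split <;> omega
        rw [hx, hy, BDec (w := w) xh yh hord, BDec (w := w') xh yh hord]
        exact iff_of_eq (congrFun (congrFun comp2 xh) yh)
      · have hxm : x.val ≤ m := by have := x.2; omega
        set xh : Fin (m+1) := (⟨x.val, by omega⟩ : Fin (m+1)) with hxh
        set yh : Fin (m+1) := (⟨y.val, by omega⟩ : Fin (m+1)) with hyh
        have hx : x = va m xh := Fin.ext rfl
        have hy : y = va m yh := Fin.ext rfl
        have hord : yh.val ≤ xh.val := hyx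
        rw [hx, hy, ADec (w := w) xh yh hord, ADec (w := w') xh yh hord]
        exact iff_of_eq (congrFun (congrFun comp1 xh) yh)
    · exact iff_of_false (fun h => hle h.1) (fun h => hle h.1)
  · intro x y
    by_cases hle : D1le (m+2) x y
    · have hxy := D1le_le hle
      by_cases hyb : y.val = m+1
      · have hxx : x.val ≠ m := by
          rw [D1le_iff] at hle
          have := x.2; omega
        have hx2 := x.2
        set yh : Fin (m+1) := (⟨m, by omega⟩ : Fin (m+1)) with hyh
        set xh : Fin (m+1) := (⟨if x.val = m+1 then m else x.val, by split <;> omega⟩ : Fin (m+1)) with hxh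
        have hy : y = vb m yh := by
          apply Fin.ext
          rw [vb_val]
          show y.val = if (m:ℕ) = m then m+1 else m
          rw [if_pos rfl, hyb]
        have hx : x = vb m xh := by
          apply Fin.ext
          rw [vb_val]
          show x.val = if (if x.val = m+1 then m else x.val) = m then m+1 else _
          by_cases h : x.val = m+1
          · rw [if_pos h, if_pos rfl, h]
          · rw [if_neg h, if_neg hxx]
            rw [hxh]
            show x.val = if x.val = m+1 then m else x.val
            rw [if_neg h]
        have hord : xh.val ≤ yh.val := by
          show (if x.val = m+1 then m else x.val) ≤ m
          split <;> omega
        rw [hx, hy, BInc (w := w) xh yh hord, BInc (w := w') xh yh hord]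
        exact iff_of_eq (congrFun (congrFun comp2 xh) yh)
      · have hym : y.val ≤ m := by have := y.2; omega
        set xh : Fin (m+1) := (⟨x.val, by omega⟩ : Fin (m+1)) with hxh
        set yh : Fin (m+1) := (⟨y.val, by omega⟩ : Fin (m+1)) with hyh
        have hx : x = va m xh := Fin.ext rfl
        have hy : y = va m yh := Fin.ext rfl
        have hord : xh.val ≤ yh.val := hxy
        rw [hx, hy, AInc (w := w) xh yh hord, AInc (w := w') xh yh hord]
        exact iff_of_eq (congrFun (congrFun comp1 xh) yh)
    · exact iff_of_false (fun h => hle h.1) (fun h => hle h.1)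

end Translation

section Glue

lemma rho_po {n : ℕ} {w : ℕ → ℕ} (hw : Set.InjOn w (Set.Iio n)) :
    IsPartialOrder (Fin n) (rhoRel n w) := by
  refine { refl := fun a => Or.inl rfl, trans := ?_, antisymm := ?_ }
  · rintro a b c (rfl | h1) h2
    · exact h2
    · rcases h2 with rfl | h2
      · exact Or.inr h1
      · exact Or.inr (h1.trans h2)
  · rintro a b (rfl | h1) h2
    · rfl
    · rcases h2 with rfl | h2
      · rfl
      · omega

lemma rho_total {n : ℕ} {w : ℕ → ℕ} (hw : Set.InjOn w (Set.Iio n)) (x y : Fin n) :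
    rhoRel n w x y ∨ rhoRel n w y x := by
  rcases lt_trichotomy (w x.val) (w y.val) with h | h | h
  · exact Or.inl (Or.inr h)
  · exact Or.inl (Or.inl (Fin.ext (hw (by simp only [Set.mem_Iio]; exact x.2)
      (by simp only [Set.mem_Iio]; exact y.2) h)))
  · exact Or.inr (Or.inr h)

lemma rho_adapted {n : ℕ} {w : ℕ → ℕ} (hw : Set.InjOn w (Set.Iio n)) :
    AdaptedG (D1le n) (rhoRel n w) := by
  intro i j _ h1 h2
  rcases rho_total hw i j with h | h
  · exact (h1 h).elim
  · exact (h2 h).elim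

open Classical in
noncomputable def rankw (n : ℕ) (s : Fin n → Fin n → Prop) : ℕ → ℕ := fun j =>
  if h : j < n then (Finset.univ.filter (fun z => s z ⟨j, h⟩)).card else 0

open Classical in
lemma rankw_val {n : ℕ} (s : Fin n → Fin n → Prop) (x : Fin n) :
    rankw n s x.val = (Finset.univ.filter (fun z => s z x)).card := by
  unfold rankw
  rw [dif_pos x.2]

lemma rankw_le_iff {n : ℕ} {s : Fin n → Fin n → Prop} (hs : IsLinearOrder (Fin n) s) (x y : Fin n) :
    s x y ↔ rankw n s x.val ≤ rankw n s y.val := by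
  classical
  rw [rankw_val, rankw_val]
  constructor
  · intro h
    apply Finset.card_le_card
    intro z hz
    simp only [Finset.mem_filter, Finset.mem_univ, true_and] at hz ⊢
    exact hs.toIsPreorder.toIsTrans.trans z x y hz h
  · intro h
    by_contra hns
    have hsyx : s y x := (hs.toTotal.total x y).resolve_left hns
    have hne : x ≠ y := by
      rintro rfl
      exact hns (hs.toIsPreorder.toRefl.refl x)
    have hss : (Finset.univ.filter (fun z => s z y)) ⊂ (Finset.univ.filter (fun z => s z x)) := by
      constructor
      · intro z hz
        simp only [Finset.mem_filter, Finset.mem_univ, true_and] at hz ⊢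
        exact hs.toIsPreorder.toIsTrans.trans z y x hz hsyx
      · intro hsub
        have hx : x ∈ Finset.univ.filter (fun z => s z x) := by
          simp only [Finset.mem_filter, Finset.mem_univ, true_and]
          exact hs.toIsPreorder.toRefl.refl x
        have := hsub hx
        simp only [Finset.mem_filter, Finset.mem_univ, true_and] at this
        exact hns this
    have := Finset.card_lt_card hss
    omega

lemma rank_injOn {n : ℕ} {s : Fin n → Fin n → Prop} (hs : IsLinearOrder (Fin n) s) :
    Set.InjOn (rankw n s) (Set.Iio n) := by
  intro a ha b hb hab
  simp only [Set.mem_Iio] at ha hb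
  have h1 : s ⟨a, ha⟩ ⟨b, hb⟩ := (rankw_le_iff hs ⟨a, ha⟩ ⟨b, hb⟩).mpr
    (by show rankw n s a ≤ rankw n s b; omega)
  have h2 : s ⟨b, hb⟩ ⟨a, ha⟩ := (rankw_le_iff hs ⟨b, hb⟩ ⟨a, ha⟩).mpr
    (by show rankw n s b ≤ rankw n s a; omega)
  have := hs.toIsPartialOrder.toAntisymm.antisymm _ _ h1 h2
  exact congrArg Fin.val this

lemma rho_rank {n : ℕ} {s : Fin n → Fin n → Prop} (hs : IsLinearOrder (Fin n) s) :
    rhoRel n (rankw n s) = s := by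
  funext x y
  apply propext
  unfold rhoRel
  constructor
  · rintro (rfl | h)
    · exact hs.toIsPreorder.toRefl.refl x
    · exact (rankw_le_iff hs x y).mpr h.le
  · intro h
    by_cases hxy : x = y
    · exact Or.inl hxy
    · refine Or.inr (lt_of_le_of_ne ((rankw_le_iff hs x y).mp h) ?_)
      intro he
      exact hxy (Fin.ext (rank_injOn hs (by simp only [Set.mem_Iio]; exact x.2)
        (by simp only [Set.mem_Iio]; exact y.2) he))

lemma D1le_trans {n : ℕ} (a b c : Fin n) (h1 : D1le n a b) (h2 : D1le n b c) : D1le n a c := by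
  unfold D1le at *
  rw [Fin.ext_iff] at *
  have := a.2; have := b.2; have := c.2
  omega

/-- Linear extensions preserve `Dec` and `Inc`. -/
lemma ext_dec_inc {n : ℕ} {le l s : Fin n → Fin n → Prop}
    (hl : IsPartialOrder (Fin n) l) (had : AdaptedG le l) (hs : IsLinearOrder (Fin n) s)
    (hls : ∀ x y, l x y → s x y)
    (htr : ∀ a b c, le a b → le b c → le a c) :
    (∀ x y, DecRelG le l x y ↔ DecRelG le s x y) ∧
    (∀ x y, IncRelG le l x y ↔ IncRelG le s x y) := by
  have hanti : ∀ a b, s a b → s b a → a = b := hs.toIsPartialOrder.toAntisymm.antisymm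
  have hlrefl : ∀ a, l a a := hl.toIsPreorder.toRefl.refl
  constructor
  · intro x y
    constructor
    · rintro ⟨h1, h2⟩
      exact ⟨h1, fun k hk1 hk2 => hls _ _ (h2 k hk1 hk2)⟩
    · rintro ⟨h1, h2⟩
      refine ⟨h1, fun k hk1 hk2 => ?_⟩
      by_contra hnk
      have hyk : ¬ l y k := by
        intro hyk
        have := hanti k y (h2 k hk1 hk2) (hls _ _ hyk)
        subst this
        exact hnk (hlrefl k)
      obtain ⟨j, hyj, hjk, hlyj, hlkj⟩ := had y k hk1 hyk hnk
      have hjx : le j x := htr j k x hjk hk2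
      have h3 : s j y := h2 j hyj hjx
      have h4 : s y j := hls _ _ hlyj
      have := hanti j y h3 h4
      subst this
      exact hnk hlkj
  · intro x y
    constructor
    · rintro ⟨h1, h2⟩
      exact ⟨h1, fun k hk1 hk2 => hls _ _ (h2 k hk1 hk2)⟩
    · rintro ⟨h1, h2⟩
      refine ⟨h1, fun k hk1 hk2 => ?_⟩
      by_contra hnk
      have hyk : ¬ l y k := by
        intro hyk
        have := hanti k y (h2 k hk1 hk2) (hls _ _ hyk)
        subst this
        exact hnk (hlrefl k)
      obtain ⟨j, hkj, hjy, hlkj, hlyj⟩ := had k y hk2 hnk hyk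
      have hxj : le x j := htr x k j hk1 hkj
      have h3 : s j y := h2 j hxj hjy
      have h4 : s y j := hls _ _ hlyj
      have := hanti j y h3 h4
      subst this
      exact hnk hlkj

lemma quot_card_eq {α β : Type*} (f : α → β) (R : α → α → Prop)
    (hR : ∀ a b, R a b ↔ f a = f b) :
    Nat.card (Quot R) = Nat.card (Set.range f) := by
  apply Nat.card_eq_of_bijective
    (Quot.lift (fun a => (⟨f a, ⟨a, rfl⟩⟩ : Set.range f))
      (fun a b hab => Subtype.ext ((hR a b).mp hab)))
  constructor
  · intro qa qb
    induction qa using Quot.ind with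
    | _ a =>
    induction qb using Quot.ind with
    | _ b =>
    intro h
    exact Quot.sound ((hR a b).mpr (congrArg Subtype.val h))
  · rintro ⟨c, a, rfl⟩
    exact ⟨Quot.mk R a, rfl⟩

lemma card_range_eq_of_iff {α β γ : Type*} (f : α → β) (g : α → γ)
    (h : ∀ a a', f a = f a' ↔ g a = g a') :
    Nat.card (Set.range f) = Nat.card (Set.range g) := by
  apply Nat.card_eq_of_bijective
    (fun x : Set.range f => (⟨g x.2.choose, ⟨x.2.choose, rfl⟩⟩ : Set.range g))
  constructor
  · intro a b hab
    apply Subtype.ext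
    rw [← a.2.choose_spec, ← b.2.choose_spec]
    exact (h _ _).mpr (congrArg Subtype.val hab)
  · rintro ⟨c, a, rfl⟩
    refine ⟨⟨f a, ⟨a, rfl⟩⟩, Subtype.ext ?_⟩
    exact (h _ _).mp (⟨f a, ⟨a, rfl⟩⟩ : Set.range f).2.choose_spec

end Glue

/-- `|qh.str(kD₁)| = 2·Cₙ − 3·C_{n-1}` for `n ≥ 3`. -/
theorem card_qhStr_D1 (n : ℕ) (hn : 3 ≤ n) :
    Nat.card (Quot (fun (l₁ l₂ : {l : Fin n → Fin n → Prop //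
        IsPartialOrder (Fin n) l ∧ AdaptedG (D1le n) l}) =>
      QHEquivG (D1le n) l₁.1 l₂.1)) + 3 * catalan (n - 1) = 2 * catalan n := by
  obtain ⟨m, rfl⟩ : ∃ m, n = m + 2 := ⟨n - 2, by omega⟩
  rw [show m + 2 - 1 = m + 1 by omega]
  suffices hq : Nat.card (Quot (fun (l₁ l₂ : {l : Fin (m+2) → Fin (m+2) → Prop //
        IsPartialOrder (Fin (m+2)) l ∧ AdaptedG (D1le (m+2)) l}) =>
      QHEquivG (D1le (m+2)) l₁.1 l₂.1)) = Nat.card ↥(SD m) by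
    rw [hq]
    exact card_SD m
  set A := {l : Fin (m+2) → Fin (m+2) → Prop //
    IsPartialOrder (Fin (m+2)) l ∧ AdaptedG (D1le (m+2)) l} with hA
  set psi : A → ((Fin (m+2) → Fin (m+2) → Prop) × (Fin (m+2) → Fin (m+2) → Prop)) :=
    fun l => ((fun x y => DecRelG (D1le (m+2)) l.1 x y),
      (fun x y => IncRelG (D1le (m+2)) l.1 x y)) with hpsi
  have hiff : ∀ a b : A, QHEquivG (D1le (m+2)) a.1 b.1 ↔ psi a = psi b := by
    intro a b
    constructor
    · intro h
      exact Prod.ext (funext fun x => funext fun y => propext (h.1 x y))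
        (funext fun x => funext fun y => propext (h.2 x y))
    · intro h
      constructor
      · intro x y
        exact iff_of_eq (congrFun (congrFun (congrArg Prod.fst h) x) y)
      · intro x y
        exact iff_of_eq (congrFun (congrFun (congrArg Prod.snd h) x) y)
  rw [quot_card_eq psi _ hiff]
  set F1 : {w : ℕ → ℕ // Set.InjOn w (Set.Iio (m+2))} → A :=
    fun w => ⟨rhoRel (m+2) w.1, rho_po w.2, rho_adapted w.2⟩ with hF1
  have hrange : Set.range psi = Set.range (fun w => psi (F1 w)) := by
    apply Set.Subset.antisymm
    · rintro P ⟨l, rfl⟩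
      letI := l.2.1
      obtain ⟨s, hs, hls⟩ := extend_partialOrder l.1
      have hDI := ext_dec_inc l.2.1 l.2.2 hs (fun x y h => hls x y h)
        (fun a b c h1 h2 => D1le_trans a b c h1 h2)
      refine ⟨⟨rankw (m+2) s, rank_injOn hs⟩, ?_⟩
      have hrel : rhoRel (m+2) (rankw (m+2) s) = s := rho_rank hs
      simp only [hpsi, hF1]
      rw [hrel]
      exact Prod.ext
        (funext fun x => funext fun y => propext ((hDI.1 x y).symm))
        (funext fun x => funext fun y => propext ((hDI.2 x y).symm))
    · rintro P ⟨w, rfl⟩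
      exact ⟨F1 w, rfl⟩
  rw [hrange]
  have hgad := card_range_eq_of_iff (fun w => psi (F1 w))
    (fun w : {w : ℕ → ℕ // Set.InjOn w (Set.Iio (m+2))} => Phi m w.1) ?_
  · rw [hgad]
    have hSD : Set.range (fun w : {w : ℕ → ℕ // Set.InjOn w (Set.Iio (m+2))} => Phi m w.1)
        = SD m := by
      apply Set.Subset.antisymm
      · rintro P ⟨w, rfl⟩
        exact ⟨w.1, w.2, rfl⟩
      · rintro P ⟨w, hw, rfl⟩
        exact ⟨⟨w, hw⟩, rfl⟩
    rw [hSD]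
  · intro a a'
    constructor
    · intro h
      apply key_forward
      · intro x y
        have h1 := iff_of_eq (congrFun (congrFun (congrArg Prod.fst h) x) y)
        exact (decT_iff a.2 x y).symm.trans (h1.trans (decT_iff a'.2 x y))
      · intro x y
        have h1 := iff_of_eq (congrFun (congrFun (congrArg Prod.snd h) x) y)
        exact (incT_iff a.2 x y).symm.trans (h1.trans (incT_iff a'.2 x y))
    · intro h
      obtain ⟨hD, hI⟩ := key_backward h
      refine Prod.ext ?_ ?_
      · funext x y
        exact propext ((decT_iff a.2 x y).trans ((hD x y).trans (decT_iff a'.2 x y).symm))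
      · funext x y
        exact propext ((incT_iff a.2 x y).trans ((hI x y).trans (incT_iff a'.2 x y).symm))
end
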